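/- arXiv:1810.00920 — 7 statements merged into one kernel-verified Lean document; each statement's English description precedes it below -/
import Mathlib

section
/- If A ⊆ C([n],a) and B ⊆ C([n],b) are cross-intersecting families, then the lexicographic families L([n],|A|,a) and L([n],|B|,b) are also cross-intersecting. -/
open Finset

/-- `A` precedes `B` in the lexicographic order: the minimal element of `A \ B` is smaller
than the minimal element of `B \ A`. -/
def lexLt (A B : Finset ℕ) : Prop := (A \ B).min < (B \ A).min

/-- `L` is the family of the `m` lexicographically first `k`-subsets of `[n]`, characterized
as an initial segment of size `m` of the lexicographic order on `C([n],k)`. -/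
def isLexInitSeg (n m k : ℕ) (L : Finset (Finset ℕ)) : Prop :=
  L ⊆ (Finset.Icc 1 n).powersetCard k ∧ L.card = m ∧
    ∀ A ∈ L, ∀ B ∈ (Finset.Icc 1 n).powersetCard k, lexLt B A → B ∈ L


attribute [-instance] instDecidableEqFin

open Finset.Colex
open scoped FinsetFamily

section HiltonKK

variable {n : ℕ}


def fmap (n : ℕ) (S : Finset ℕ) : Finset (Fin n) :=
  univ.filter fun i => n - i.val ∈ S

def gmap (n : ℕ) (s : Finset (Fin n)) : Finset ℕ := s.image fun i => n - i.val

lemma mem_fmap {S : Finset ℕ} {i : Fin n} : i ∈ fmap n S ↔ n - i.val ∈ S := by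
  simp [fmap]

lemma gmap_fmap {S : Finset ℕ} (hS : S ⊆ Finset.Icc 1 n) : gmap n (fmap n S) = S := by
  ext x
  simp only [gmap, fmap, mem_image, mem_filter, mem_univ, true_and]
  constructor
  · rintro ⟨i, hi, rfl⟩; exact hi
  · intro hx
    obtain ⟨h1, h2⟩ := mem_Icc.1 (hS hx)
    exact ⟨⟨n - x, by omega⟩, by simpa using by rw [show n - (n - x) = x by omega]; exact hx, by simp; omega⟩

lemma fmap_gmap (s : Finset (Fin n)) : fmap n (gmap n s) = s := by
  ext i
  simp only [mem_fmap, gmap, mem_image]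
  constructor
  · rintro ⟨j, hj, hji⟩
    have : j = i := Fin.ext (by have := j.isLt; have := i.isLt; omega)
    subst this; exact hj
  · intro hi; exact ⟨i, hi, rfl⟩

lemma gmap_subset_Icc (s : Finset (Fin n)) : gmap n s ⊆ Finset.Icc 1 n := by
  intro x hx
  simp only [gmap, mem_image] at hx
  obtain ⟨j, _, rfl⟩ := hx
  have := j.isLt
  exact mem_Icc.2 (by omega)

lemma card_gmap (s : Finset (Fin n)) : (gmap n s).card = s.card := by
  apply card_image_of_injOn
  intro i hi j hj hij
  have hij' : n - i.val = n - j.val := hij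
  exact Fin.ext (by have := i.isLt; have := j.isLt; omega)

lemma card_fmap {S : Finset ℕ} (hS : S ⊆ Finset.Icc 1 n) : (fmap n S).card = S.card := by
  calc (fmap n S).card = (gmap n (fmap n S)).card := (card_gmap _).symm
  _ = S.card := by rw [gmap_fmap hS]

lemma fmap_inter (S T : Finset ℕ) : fmap n (S ∩ T) = fmap n S ∩ fmap n T := by
  ext i; simp [mem_fmap, and_assoc]

lemma fmap_injOn {S T : Finset ℕ} (hS : S ⊆ Finset.Icc 1 n) (hT : T ⊆ Finset.Icc 1 n)
    (h : fmap n S = fmap n T) : S = T := by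
  rw [← gmap_fmap hS, ← gmap_fmap hT, h]

lemma inter_nonempty_iff {S T : Finset ℕ} (hS : S ⊆ Finset.Icc 1 n) :
    (S ∩ T).Nonempty ↔ (fmap n S ∩ fmap n T).Nonempty := by
  rw [← fmap_inter, ← card_pos, ← card_pos, card_fmap (fun x hx => hS (mem_inter.1 hx).1)]

lemma lexLt_iff_exists {S T : Finset ℕ} (hc : S.card = T.card) (hne : S ≠ T) :
    lexLt S T ↔ ∃ x ∈ S, x ∉ T ∧ ∀ y ∈ T, y ∉ S → x < y := by
  have hST : (S \ T).Nonempty := by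
    rw [sdiff_nonempty]
    intro h
    exact hne (eq_of_subset_of_card_le h hc.ge)
  have hTS : (T \ S).Nonempty := by
    rw [sdiff_nonempty]
    intro h
    exact hne (eq_of_subset_of_card_le h hc.le).symm
  rw [lexLt, ← Finset.coe_min' hST, ← Finset.coe_min' hTS, WithTop.coe_lt_coe]
  constructor
  · intro h
    have h1 := mem_sdiff.1 (min'_mem _ hST)
    refine ⟨_, h1.1, h1.2, fun y hy hys => ?_⟩
    exact h.trans_le (min'_le _ _ (mem_sdiff.2 ⟨hy, hys⟩))
  · rintro ⟨x, hxS, hxT, hx⟩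
    have h2 := mem_sdiff.1 (min'_mem _ hTS)
    exact (min'_le _ _ (mem_sdiff.2 ⟨hxS, hxT⟩)).trans_lt (hx _ h2.1 h2.2)

lemma lexLt_iff_colex {S T : Finset ℕ} (hS : S ⊆ Finset.Icc 1 n) (hT : T ⊆ Finset.Icc 1 n)
    (hc : S.card = T.card) (hne : S ≠ T) :
    lexLt S T ↔ toColex (fmap n T) < toColex (fmap n S) := by
  rw [lexLt_iff_exists hc hne, toColex_lt_toColex_iff_exists_forall_lt]
  constructor
  · rintro ⟨x, hxS, hxT, hx⟩
    obtain ⟨hx1, hx2⟩ := mem_Icc.1 (hS hxS)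
    refine ⟨⟨n - x, by omega⟩, ?_, ?_, ?_⟩
    · rw [mem_fmap]; simpa [show n - (n - x) = x by omega] using hxS
    · rw [mem_fmap]; simpa [show n - (n - x) = x by omega] using hxT
    · intro b hbT hbS
      rw [mem_fmap] at hbT hbS
      have hb := b.isLt
      have := hx _ hbT hbS
      exact Fin.mk_lt_mk.2 (by omega) |>.trans_le (le_refl _)
  · rintro ⟨a, haS, haT, ha⟩
    rw [mem_fmap] at haS haT
    refine ⟨n - a.val, haS, haT, fun y hyT hyS => ?_⟩
    obtain ⟨hy1, hy2⟩ := mem_Icc.1 (hT hyT)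
    have hb : (⟨n - y, by omega⟩ : Fin n) ∈ fmap n T := by
      rw [mem_fmap]; simpa [show n - (n - y) = y by omega] using hyT
    have hb' : (⟨n - y, by omega⟩ : Fin n) ∉ fmap n S := by
      rw [mem_fmap]; simpa [show n - (n - y) = y by omega] using hyS
    have := ha _ hb hb'
    have ha' := a.isLt
    have hlt : n - y < a.val := this
    omega

lemma colex_compl_lt {α : Type*} [LinearOrder α] [Fintype α] [DecidableEq α] {s t : Finset α} :
    toColex tᶜ < toColex sᶜ ↔ toColex s < toColex t := by
  simp only [toColex_lt_toColex_iff_exists_forall_lt, Finset.mem_compl, not_not]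
  constructor
  · rintro ⟨a, h1, h2, h3⟩; exact ⟨a, h2, h1, fun b hb hb' => h3 b hb' hb⟩
  · rintro ⟨a, h1, h2, h3⟩; exact ⟨a, h2, h1, fun b hb hb' => h3 b hb' hb⟩

lemma isInitSeg_iterate_shadow {α : Type*} [LinearOrder α] [Fintype α]
    {𝒜 : Finset (Finset α)} {r : ℕ} (h : IsInitSeg 𝒜 r) (k : ℕ) :
    IsInitSeg (∂^[k] 𝒜) (r - k) := by
  induction k generalizing 𝒜 r with
  | zero => simpa using h
  | succ k ih =>
    rw [Function.iterate_succ_apply]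
    have h2 := ih h.shadow
    rw [Nat.sub_sub, Nat.add_comm 1 k] at h2
    exact h2

/-- Kruskal–Katona in Hilton's form: if `A ⊆ C([n],a)` and `B ⊆ C([n],b)` are
cross-intersecting, then the lexicographic families `L([n],|A|,a)` and `L([n],|B|,b)`
are also cross-intersecting. -/
theorem hilton_kruskal_katona (n a b : ℕ)
    (A B : Finset (Finset ℕ))
    (hA : A ⊆ (Finset.Icc 1 n).powersetCard a)
    (hB : B ⊆ (Finset.Icc 1 n).powersetCard b)
    (hcross : ∀ S ∈ A, ∀ T ∈ B, (S ∩ T).Nonempty)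
    (LA LB : Finset (Finset ℕ))
    (hLA : isLexInitSeg n A.card a LA) (hLB : isLexInitSeg n B.card b LB) :
    ∀ S ∈ LA, ∀ T ∈ LB, (S ∩ T).Nonempty := by
  intro S hS T hT
  obtain ⟨hLA1, hLA2, hLA3⟩ := hLA
  obtain ⟨hLB1, hLB2, hLB3⟩ := hLB
  have hSmem := mem_powersetCard.1 (hLA1 hS)
  have hTmem := mem_powersetCard.1 (hLB1 hT)
  by_contra hcon
  rw [not_nonempty_iff_eq_empty] at hcon
  -- basic nonemptiness of A and B
  have hAne : A.Nonempty := by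
    rw [← card_pos, ← hLA2, card_pos]; exact ⟨S, hS⟩
  have hBne : B.Nonempty := by
    rw [← card_pos, ← hLB2, card_pos]; exact ⟨T, hT⟩
  -- a ≥ 1 and b ≥ 1
  have ha : 1 ≤ a := by
    by_contra h
    obtain ⟨S₀, hS₀⟩ := hAne
    obtain ⟨T₀, hT₀⟩ := hBne
    have h0 := mem_powersetCard.1 (hA hS₀)
    have : S₀ = ∅ := card_eq_zero.1 (by omega)
    have := hcross S₀ hS₀ T₀ hT₀
    simp [‹S₀ = ∅›] at this
  have hb : 1 ≤ b := by
    by_contra h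
    obtain ⟨S₀, hS₀⟩ := hAne
    obtain ⟨T₀, hT₀⟩ := hBne
    have h0 := mem_powersetCard.1 (hB hT₀)
    have : T₀ = ∅ := card_eq_zero.1 (by omega)
    have := hcross S₀ hS₀ T₀ hT₀
    simp [‹T₀ = ∅›] at this
  -- a + b ≤ n
  have hab : a + b ≤ n := by
    by_contra h
    have hsub : S ∪ T ⊆ Finset.Icc 1 n := union_subset hSmem.1 hTmem.1
    have h1 : (S ∪ T).card ≤ n := by
      simpa [Nat.card_Icc] using card_le_card hsub
    have h2 : (S ∪ T).card = a + b := by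
      rw [card_union_of_disjoint (disjoint_iff_inter_eq_empty.2 hcon), hSmem.2, hTmem.2]
    omega
  -- the transported families
  set k := n - a - b with hk
  set U : Finset (Finset (Fin n)) := LA.image (fmap n) with hU
  set ℒ : Finset (Finset (Fin n)) := (LB.image (fmap n)).image compl with hℒ
  set As : Finset (Finset (Fin n)) := A.image (fmap n) with hAs
  set Bs : Finset (Finset (Fin n)) := (B.image (fmap n)).image compl with hBs
  have hcardFin : Fintype.card (Fin n) = n := Fintype.card_fin n
  -- cards of images
  have cardU : U.card = A.card := by
    rw [hU, card_image_of_injOn, hLA2]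
    intro X hX Y hY hXY
    exact fmap_injOn (mem_powersetCard.1 (hLA1 hX)).1 (mem_powersetCard.1 (hLA1 hY)).1 hXY
  have cardℒ : ℒ.card = B.card := by
    rw [hℒ, card_image_of_injective _ compl_injective, card_image_of_injOn, hLB2]
    intro X hX Y hY hXY
    exact fmap_injOn (mem_powersetCard.1 (hLB1 hX)).1 (mem_powersetCard.1 (hLB1 hY)).1 hXY
  have cardAs : As.card = A.card := by
    rw [hAs, card_image_of_injOn]
    intro X hX Y hY hXY
    exact fmap_injOn (mem_powersetCard.1 (hA hX)).1 (mem_powersetCard.1 (hA hY)).1 hXY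
  have cardBs : Bs.card = B.card := by
    rw [hBs, card_image_of_injective _ compl_injective, card_image_of_injOn]
    intro X hX Y hY hXY
    exact fmap_injOn (mem_powersetCard.1 (hB hX)).1 (mem_powersetCard.1 (hB hY)).1 hXY
  -- sizedness
  have sizedBs : (Bs : Set (Finset (Fin n))).Sized (n - b) := by
    intro u hu
    simp only [hBs, coe_image, Set.mem_image, mem_coe] at hu
    obtain ⟨v, ⟨T₀, hT₀, rfl⟩, rfl⟩ := hu
    have h0 := mem_powersetCard.1 (hB hT₀)
    rw [card_compl, hcardFin, card_fmap h0.1, h0.2]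
  have sizedℒ : (ℒ : Set (Finset (Fin n))).Sized (n - b) := by
    intro u hu
    simp only [hℒ, coe_image, Set.mem_image, mem_coe] at hu
    obtain ⟨v, ⟨T₀, hT₀, rfl⟩, rfl⟩ := hu
    have h0 := mem_powersetCard.1 (hLB1 hT₀)
    rw [card_compl, hcardFin, card_fmap h0.1, h0.2]
  -- ℒ is an initial segment of colex
  have initℒ : IsInitSeg ℒ (n - b) := by
    refine ⟨sizedℒ, ?_⟩
    intro s t hs hts
    obtain ⟨hlt, hcardt⟩ := hts
    simp only [hℒ, mem_image] at hs
    obtain ⟨v, ⟨T₀, hT₀, rfl⟩, rfl⟩ := hs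
    have h0 := mem_powersetCard.1 (hLB1 hT₀)
    set T₁ := gmap n tᶜ with hT₁def
    have hfT₁ : fmap n T₁ = tᶜ := fmap_gmap _
    have hT₁Icc : T₁ ⊆ Finset.Icc 1 n := gmap_subset_Icc _
    have hT₁card : T₁.card = b := by
      rw [hT₁def, card_gmap, card_compl, hcardFin, hcardt]
      omega
    have hcolex : toColex (fmap n T₀) < toColex (fmap n T₁) := by
      rw [hfT₁, ← compl_compl (fmap n T₀)]
      exact colex_compl_lt.2 hlt
    have hne : T₁ ≠ T₀ := by
      intro h
      rw [h] at hcolex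
      exact lt_irrefl _ hcolex
    have hlex : lexLt T₁ T₀ := by
      rw [lexLt_iff_colex hT₁Icc h0.1 (by rw [hT₁card, h0.2]) hne]
      exact hcolex
    have hT₁mem : T₁ ∈ LB := hLB3 T₀ hT₀ T₁ (mem_powersetCard.2 ⟨hT₁Icc, hT₁card⟩) hlex
    simp only [hℒ, mem_image]
    exact ⟨tᶜ, ⟨T₁, hT₁mem, hfT₁⟩, compl_compl t⟩
  -- cross-intersecting: As disjoint from iterated shadow of Bs
  have hdisj : Disjoint As (∂^[k] Bs) := by
    rw [disjoint_left]
    intro X hX hX'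
    simp only [hAs, mem_image] at hX
    obtain ⟨S₀, hS₀, rfl⟩ := hX
    rw [mem_shadow_iterate_iff_exists_sdiff] at hX'
    obtain ⟨u, hu, hsub, _⟩ := hX'
    simp only [hBs, mem_image] at hu
    obtain ⟨v, ⟨T₀, hT₀, rfl⟩, rfl⟩ := hu
    have hS₀Icc := (mem_powersetCard.1 (hA hS₀)).1
    have := hcross S₀ hS₀ T₀ hT₀
    rw [inter_nonempty_iff hS₀Icc] at this
    obtain ⟨x, hx⟩ := this
    rw [mem_inter] at hx
    exact (mem_compl.1 (hsub hx.1)) hx.2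
  -- sized of iterated shadow of Bs and of ℒ
  have sizedShadow : ∀ (F : Finset (Finset (Fin n))), (F : Set (Finset (Fin n))).Sized (n - b) →
      ∀ X ∈ ∂^[k] F, X.card = a := by
    intro F hF X hX
    rw [mem_shadow_iterate_iff_exists_sdiff] at hX
    obtain ⟨u, hu, hsub, hcard⟩ := hX
    have e1 := hF (mem_coe.2 hu)
    have e2 := card_sdiff_of_subset hsub
    have e3 := card_le_card hsub
    omega
  -- the two families inside powersetCard a of univ
  have hsubAs : As ⊆ univ.powersetCard a := by
    intro X hX
    simp only [hAs, mem_image] at hX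
    obtain ⟨S₀, hS₀, rfl⟩ := hX
    have h0 := mem_powersetCard.1 (hA hS₀)
    exact mem_powersetCard.2 ⟨subset_univ _, by rw [card_fmap h0.1, h0.2]⟩
  have hsubShadowBs : ∂^[k] Bs ⊆ univ.powersetCard a := by
    intro X hX
    exact mem_powersetCard.2 ⟨subset_univ _, sizedShadow Bs sizedBs X hX⟩
  have hcount : As.card + (∂^[k] Bs).card ≤ ((univ : Finset (Fin n)).powersetCard a).card := by
    rw [← card_union_of_disjoint hdisj]
    exact card_le_card (union_subset hsubAs hsubShadowBs)
  -- Kruskal-Katona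
  have hkk : (∂^[k] ℒ).card ≤ (∂^[k] Bs).card := by
    exact iterated_kk sizedBs (by rw [cardℒ, cardBs]) initℒ
  -- J := iterated shadow of ℒ, f S ∈ J
  have hfS_J : fmap n S ∈ ∂^[k] ℒ := by
    rw [mem_shadow_iterate_iff_exists_sdiff]
    refine ⟨(fmap n T)ᶜ, ?_, ?_, ?_⟩
    · simp only [hℒ, mem_image]
      exact ⟨fmap n T, ⟨T, hT, rfl⟩, rfl⟩
    · rw [subset_compl_comm]
      intro i hi
      rw [mem_compl]
      intro hi2
      have : i ∈ fmap n S ∩ fmap n T := mem_inter.2 ⟨hi2, hi⟩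
      rw [← fmap_inter, hcon] at this
      simpa [fmap] using this
    · have hsub : fmap n S ⊆ (fmap n T)ᶜ := by
        rw [subset_compl_comm]
        intro i hi
        rw [mem_compl]
        intro hi2
        have : i ∈ fmap n S ∩ fmap n T := mem_inter.2 ⟨hi2, hi⟩
        rw [← fmap_inter, hcon] at this
        simpa [fmap] using this
      rw [card_sdiff_of_subset hsub, card_compl, hcardFin, card_fmap hTmem.1, card_fmap hSmem.1,
        hSmem.2, hTmem.2]
      omega
  have initJ : IsInitSeg (∂^[k] ℒ) a := by
    have := isInitSeg_iterate_shadow initℒ k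
    have hnb : n - b - k = a := by omega
    rwa [hnb] at this
  -- cover: powersetCard a ⊆ J ∪ U
  have hcover : univ.powersetCard a ⊆ (∂^[k] ℒ) ∪ U := by
    intro X hX
    have hXcard : X.card = a := (mem_powersetCard.1 hX).2
    rcases lt_trichotomy (toColex X) (toColex (fmap n S)) with hlt | heq | hgt
    · exact mem_union_left _ (initJ.2 hfS_J ⟨hlt, hXcard⟩)
    · rw [toColex_inj.1 heq]
      exact mem_union_right _ (mem_image.2 ⟨S, hS, rfl⟩)
    · set S₁ := gmap n X with hS₁def
      have hfS₁ : fmap n S₁ = X := fmap_gmap _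
      have hS₁Icc : S₁ ⊆ Finset.Icc 1 n := gmap_subset_Icc _
      have hS₁card : S₁.card = a := by rw [hS₁def, card_gmap, hXcard]
      have hcolex : toColex (fmap n S) < toColex (fmap n S₁) := by rw [hfS₁]; exact hgt
      have hne : S₁ ≠ S := by
        intro h
        rw [h] at hcolex
        exact lt_irrefl _ hcolex
      have hlex : lexLt S₁ S := by
        rw [lexLt_iff_colex hS₁Icc hSmem.1 (by rw [hS₁card, hSmem.2]) hne]
        exact hcolex
      have : S₁ ∈ LA := hLA3 S hS S₁ (mem_powersetCard.2 ⟨hS₁Icc, hS₁card⟩) hlex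
      exact mem_union_right _ (mem_image.2 ⟨S₁, this, hfS₁⟩)
  -- final counting contradiction
  have hinter : fmap n S ∈ (∂^[k] ℒ) ∩ U :=
    mem_inter.2 ⟨hfS_J, mem_image.2 ⟨S, hS, rfl⟩⟩
  have h1 : ((univ : Finset (Fin n)).powersetCard a).card ≤ ((∂^[k] ℒ) ∪ U).card :=
    card_le_card hcover
  have h2 : ((∂^[k] ℒ) ∪ U).card + ((∂^[k] ℒ) ∩ U).card = (∂^[k] ℒ).card + U.card :=
    card_union_add_card_inter _ _
  have h3 : 1 ≤ ((∂^[k] ℒ) ∩ U).card := card_pos.2 ⟨_, hinter⟩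
  omega
end HiltonKK
end

section
/- Let a, b be positive integers with a + b ≤ n - 1, and let P, Q be nonempty subsets of [2,n] with |P| ≤ a and |Q| ≤ b. Then the lexicographic families L([2,n],P,a) and L([2,n],Q,b) are cross-intersecting if and only if P and Q strongly intersect. -/
open Finset

/-- The lexicographic family `L(X,S,a) = {A ∈ C(X,a) : A ≼ S ∩ X}` in the
lexicographic/containment order (`A ≼ B` iff `A ⊇ B` or `min (A \ B) < min (B \ A)`). -/
def lexFam (X S : Finset ℕ) (a : ℕ) : Finset (Finset ℕ) :=
  (X.powersetCard a).filter
    (fun A => (S ∩ X) ⊆ A ∨ (A \ (S ∩ X)).min < ((S ∩ X) \ A).min)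

/-- `S` and `T` strongly intersect: there is `j` with `S ∩ T ∩ [2,j] = {j}` and
`[2,j] ⊆ S ∪ T`. -/
def strongInt (S T : Finset ℕ) : Prop :=
  ∃ j : ℕ, S ∩ T ∩ Finset.Icc 2 j = {j} ∧ Finset.Icc 2 j ⊆ S ∪ T

private lemma lex_step {n j m : ℕ} {P Q A B : Finset ℕ}
    (hA : A ⊆ Finset.Icc 2 n)
    (hcov : Finset.Icc 2 j ⊆ P ∪ Q)
    (hAlex : P ⊆ A ∨ (A \ P).min < (P \ A).min)
    (hm : m ∈ (P ∩ Finset.Icc 2 j) \ A)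
    (hmin : ∀ x ∈ (Q ∩ Finset.Icc 2 j) \ B, m ≤ x) :
    (A ∩ B).Nonempty := by
  rw [mem_sdiff, mem_inter, mem_Icc] at hm
  obtain ⟨⟨hmP, _, hmj⟩, hmA⟩ := hm
  rcases hAlex with h | h
  · exact absurd (h hmP) hmA
  have hPA : m ∈ P \ A := mem_sdiff.mpr ⟨hmP, hmA⟩
  have h1 : (A \ P).min < (m : WithTop ℕ) := h.trans_le (Finset.min_le hPA)
  have hne : (A \ P).Nonempty := by
    rw [nonempty_iff_ne_empty]
    intro h0
    rw [h0, Finset.min_empty] at h1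
    exact absurd h1 (not_top_lt)
  obtain ⟨m₀, hm₀⟩ := Finset.min_of_nonempty hne
  have hm₀mem := Finset.mem_of_min hm₀
  rw [hm₀] at h1
  have h1 : m₀ < m := WithTop.coe_lt_coe.mp h1
  rw [mem_sdiff] at hm₀mem
  obtain ⟨hm₀A, hm₀P⟩ := hm₀mem
  have h2 : 2 ≤ m₀ := (mem_Icc.mp (hA hm₀A)).1
  have hm₀Q : m₀ ∈ Q := by
    have hu := hcov (mem_Icc.mpr ⟨h2, le_trans h1.le hmj⟩)
    rcases mem_union.mp hu with h' | h'
    · exact absurd h' hm₀P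
    · exact h'
  have hm₀B : m₀ ∈ B := by
    by_contra hB
    have := hmin m₀ (by
      rw [mem_sdiff, mem_inter, mem_Icc]
      exact ⟨⟨hm₀Q, h2, le_trans h1.le hmj⟩, hB⟩)
    omega
  exact ⟨m₀, mem_inter.mpr ⟨hm₀A, hm₀B⟩⟩

/-- Build disjoint extensions `A ⊇ A₀` and `B ⊇ Q` of the right sizes. -/
private lemma build_disjoint {n a b : ℕ} (hn2 : 2 ≤ n) (hab : a + b ≤ n - 1)
    {Q A₀ : Finset ℕ} (hQ : Q ⊆ Finset.Icc 2 n) (hA₀ : A₀ ⊆ Finset.Icc 2 n)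
    (hdisj : ∀ x ∈ A₀, x ∉ Q) (hca : A₀.card ≤ a) (hQb : Q.card ≤ b) :
    ∃ A B : Finset ℕ, A₀ ⊆ A ∧ Q ⊆ B ∧ A ⊆ Finset.Icc 2 n ∧ B ⊆ Finset.Icc 2 n ∧
      A.card = a ∧ B.card = b ∧ ∀ x ∈ A, x ∉ B := by
  have hcard : (Finset.Icc 2 n).card = n - 1 := by rw [Nat.card_Icc]; omega
  have hA₀sub : A₀ ⊆ Finset.Icc 2 n \ Q := by
    intro x hx
    exact mem_sdiff.mpr ⟨hA₀ hx, hdisj x hx⟩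
  have hQIcc : Q ⊆ Finset.Icc 2 n := hQ
  have hsz1 : a ≤ (Finset.Icc 2 n \ Q).card := by
    rw [card_sdiff_of_subset hQIcc, hcard]; omega
  obtain ⟨A, hA0A, hAsub, hAcard⟩ := exists_subsuperset_card_eq hA₀sub hca hsz1
  have hAX : A ⊆ Finset.Icc 2 n := hAsub.trans (sdiff_subset)
  have hQsub : Q ⊆ Finset.Icc 2 n \ A := by
    intro x hx
    refine mem_sdiff.mpr ⟨hQ hx, fun hxA => ?_⟩
    exact (mem_sdiff.mp (hAsub hxA)).2 hx
  have hsz2 : b ≤ (Finset.Icc 2 n \ A).card := by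
    rw [card_sdiff_of_subset hAX, hcard, hAcard]; omega
  obtain ⟨B, hQB, hBsub, hBcard⟩ := exists_subsuperset_card_eq hQsub hQb hsz2
  exact ⟨A, B, hA0A, hQB, hAX, hBsub.trans (sdiff_subset), hAcard, hBcard,
    fun x hxA hxB => (mem_sdiff.mp (hBsub hxB)).2 hxA⟩

/-- For nonempty `P, Q ⊆ [2,n]` with `|P| ≤ a`, `|Q| ≤ b` and `a + b ≤ n - 1`, the families
`L([2,n],P,a)` and `L([2,n],Q,b)` are cross-intersecting iff `P` and `Q` strongly intersect. -/
theorem lex_cross_intersecting_iff (n a b : ℕ) (ha : 0 < a) (hb : 0 < b)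
    (hab : a + b ≤ n - 1)
    (P Q : Finset ℕ) (hP : P ⊆ Finset.Icc 2 n) (hQ : Q ⊆ Finset.Icc 2 n)
    (hPne : P.Nonempty) (hQne : Q.Nonempty) (hPa : P.card ≤ a) (hQb : Q.card ≤ b) :
    (∀ A ∈ lexFam (Finset.Icc 2 n) P a, ∀ B ∈ lexFam (Finset.Icc 2 n) Q b,
      (A ∩ B).Nonempty) ↔ strongInt P Q := by
  have hn2 : 2 ≤ n := by
    obtain ⟨p, hp⟩ := hPne
    have := mem_Icc.mp (hP hp)
    omega
  have hPX : P ∩ Finset.Icc 2 n = P := inter_eq_left.mpr hP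
  have hQX : Q ∩ Finset.Icc 2 n = Q := inter_eq_left.mpr hQ
  constructor
  · -- cross-intersecting → strong intersection (by contraposition)
    intro hcross
    by_contra hns
    rw [strongInt] at hns
    push_neg at hns
    -- In both cases we produce `A₀` disjoint from `Q`, with the lex property for `P`.
    rcases (P ∩ Q).eq_empty_or_nonempty with hPQ | hPQne
    · -- `P ∩ Q = ∅` : take `A₀ = P`
      have hdisj : ∀ x ∈ P, x ∉ Q := by
        intro x hx hxQ
        have : x ∈ P ∩ Q := mem_inter.mpr ⟨hx, hxQ⟩
        rw [hPQ] at this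
        exact absurd this (notMem_empty x)
      obtain ⟨A, B, hA0A, hQB, hAX, hBX, hAcard, hBcard, hABdisj⟩ :=
        build_disjoint hn2 hab hQ hP hdisj hPa hQb
      have hAmem : A ∈ lexFam (Finset.Icc 2 n) P a := by
        rw [lexFam, mem_filter, mem_powersetCard, hPX]
        exact ⟨⟨hAX, hAcard⟩, Or.inl hA0A⟩
      have hBmem : B ∈ lexFam (Finset.Icc 2 n) Q b := by
        rw [lexFam, mem_filter, mem_powersetCard, hQX]
        exact ⟨⟨hBX, hBcard⟩, Or.inl hQB⟩
      obtain ⟨x, hx⟩ := hcross A hAmem B hBmem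
      rw [mem_inter] at hx
      exact hABdisj x hx.1 hx.2
    · -- `P ∩ Q ≠ ∅` : let `j = min (P ∩ Q)`; strong intersection fails only on coverage
      set j := (P ∩ Q).min' hPQne with hjdef
      have hjPQ : j ∈ P ∩ Q := min'_mem _ _
      have hjP : j ∈ P := (mem_inter.mp hjPQ).1
      have hjn : j ≤ n := (mem_Icc.mp (hP hjP)).2
      have hj2 : 2 ≤ j := (mem_Icc.mp (hP hjP)).1
      have hj1 : P ∩ Q ∩ Finset.Icc 2 j = {j} := by
        apply Finset.Subset.antisymm
        · intro x hx
          rw [mem_inter, mem_Icc] at hx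
          have := min'_le _ _ hx.1
          rw [mem_singleton]
          omega
        · intro x hx
          rw [mem_singleton] at hx
          subst hx
          rw [mem_inter, mem_Icc]
          exact ⟨hjPQ, hj2, le_refl j⟩
      have hnotsub := hns j hj1
      obtain ⟨t, htIcc, htPQ⟩ := Finset.not_subset.mp hnotsub
      rw [mem_Icc] at htIcc
      rw [mem_union] at htPQ
      push_neg at htPQ
      obtain ⟨htP, htQ⟩ := htPQ
      have htj : t < j := lt_of_le_of_ne htIcc.2 (fun e => htP (e ▸ hjP))
      set A₀ : Finset ℕ := insert t (P.filter (fun x => x < t)) with hA₀def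
      have hA₀X : A₀ ⊆ Finset.Icc 2 n := by
        rw [hA₀def, insert_subset_iff]
        refine ⟨mem_Icc.mpr ⟨htIcc.1, le_trans htIcc.2 hjn⟩, ?_⟩
        exact (filter_subset _ _).trans hP
      have hdisj : ∀ x ∈ A₀, x ∉ Q := by
        intro x hx hxQ
        rw [hA₀def, mem_insert] at hx
        rcases hx with rfl | hx
        · exact htQ hxQ
        · rw [mem_filter] at hx
          have : x ∈ P ∩ Q := mem_inter.mpr ⟨hx.1, hxQ⟩
          have := min'_le _ _ this
          omega
      have hA₀card : A₀.card ≤ a := by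
        have h1 : (P.filter (fun x => x < t)) ⊆ P.erase j := by
          intro x hx
          rw [mem_filter] at hx
          rw [mem_erase]
          exact ⟨by omega, hx.1⟩
        have h2 : (P.filter (fun x => x < t)).card ≤ (P.erase j).card := card_le_card h1
        have h3 := card_erase_of_mem hjP
        have h4 := card_insert_le t (P.filter (fun x => x < t))
        have h5 : 1 ≤ P.card := card_pos.mpr hPne
        rw [hA₀def]
        omega
      obtain ⟨A, B, hA0A, hQB, hAX, hBX, hAcard, hBcard, hABdisj⟩ :=
        build_disjoint hn2 hab hQ hA₀X hdisj hA₀card hQb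
      have htA : t ∈ A := hA0A (by rw [hA₀def]; exact mem_insert_self _ _)
      have hAmem : A ∈ lexFam (Finset.Icc 2 n) P a := by
        rw [lexFam, mem_filter, mem_powersetCard, hPX]
        refine ⟨⟨hAX, hAcard⟩, Or.inr ?_⟩
        have h1 := Finset.min_le (mem_sdiff.mpr ⟨htA, htP⟩)
        have h2 : ((t + 1 : ℕ) : WithTop ℕ) ≤ (P \ A).min := by
          apply Finset.le_min
          intro p hp
          rw [mem_sdiff] at hp
          have htp : t < p := by
            rcases lt_trichotomy p t with h | rfl | h
            · exact absurd (hA0A (by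
                rw [hA₀def, mem_insert]
                exact Or.inr (mem_filter.mpr ⟨hp.1, h⟩))) hp.2
            · exact absurd hp.1 htP
            · exact h
          exact WithTop.coe_le_coe.mpr (Nat.succ_le_of_lt htp)
        exact lt_of_le_of_lt h1 (lt_of_lt_of_le
          (WithTop.coe_lt_coe.mpr (Nat.lt_succ_self t)) h2)
      have hBmem : B ∈ lexFam (Finset.Icc 2 n) Q b := by
        rw [lexFam, mem_filter, mem_powersetCard, hQX]
        exact ⟨⟨hBX, hBcard⟩, Or.inl hQB⟩
      obtain ⟨x, hx⟩ := hcross A hAmem B hBmem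
      rw [mem_inter] at hx
      exact hABdisj x hx.1 hx.2
  · -- strong intersection → cross-intersecting
    rintro ⟨j, hj1, hj2⟩ A hA B hB
    rw [lexFam, mem_filter, mem_powersetCard, hPX] at hA
    rw [lexFam, mem_filter, mem_powersetCard, hQX] at hB
    obtain ⟨⟨hAX, _⟩, hAlex⟩ := hA
    obtain ⟨⟨hBX, _⟩, hBlex⟩ := hB
    have hjmem : j ∈ P ∩ Q ∩ Finset.Icc 2 j := by
      rw [hj1]; exact mem_singleton_self j
    rw [mem_inter, mem_inter, mem_Icc] at hjmem
    obtain ⟨⟨hjP, hjQ⟩, hj2', _⟩ := hjmem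
    by_contra hne
    set D := ((P ∩ Finset.Icc 2 j) \ A) ∪ ((Q ∩ Finset.Icc 2 j) \ B) with hD
    rcases D.eq_empty_or_nonempty with h0 | hDne
    · have hjA : j ∈ A := by
        by_contra h
        have hmem : j ∈ D := mem_union_left _ (mem_sdiff.mpr
          ⟨mem_inter.mpr ⟨hjP, mem_Icc.mpr ⟨hj2', le_refl j⟩⟩, h⟩)
        rw [h0] at hmem
        exact absurd hmem (notMem_empty j)
      have hjB : j ∈ B := by
        by_contra h
        have hmem : j ∈ D := mem_union_right _ (mem_sdiff.mpr
          ⟨mem_inter.mpr ⟨hjQ, mem_Icc.mpr ⟨hj2', le_refl j⟩⟩, h⟩)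
        rw [h0] at hmem
        exact absurd hmem (notMem_empty j)
      exact hne ⟨j, mem_inter.mpr ⟨hjA, hjB⟩⟩
    · have hmD : D.min' hDne ∈ D := min'_mem _ _
      rcases mem_union.mp hmD with hm | hm
      · exact hne (lex_step hAX hj2 hAlex hm
          (fun x hx => min'_le _ _ (mem_union_right _ hx)))
      · have hj2'' : Finset.Icc 2 j ⊆ Q ∪ P := by rw [union_comm]; exact hj2
        have hnonempty := lex_step hBX hj2'' hBlex hm
          (fun x hx => min'_le _ _ (mem_union_left _ hx))
        obtain ⟨x, hx⟩ := hnonempty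
        rw [mem_inter] at hx
        exact hne ⟨x, mem_inter.mpr ⟨hx.2, hx.1⟩⟩
end

section
/- Let a, b be positive integers with a + b ≤ n - 1. If P, Q ⊆ [2,n] are nonempty with |P| ≤ a, |Q| ≤ b, and P, Q strongly intersect in their largest element (i.e., there exists j with P ∩ Q = {j} and P ∪ Q = [2,j]), then L([2,n],P,a) and L([2,n],Q,b) form a maximal pair of cross-intersecting families: no proper cross-intersecting superfamilies exist. -/
open Finset

lemma key_lemma (n a b : ℕ) (hab : a + b ≤ n - 1)
    (P Q : Finset ℕ) (hP : P ⊆ Finset.Icc 2 n) (hQ : Q ⊆ Finset.Icc 2 n)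
    (hPa : P.card ≤ a) (hQb : Q.card ≤ b)
    (j : ℕ) (hPQ : P ∩ Q = {j}) (hU : P ∪ Q = Finset.Icc 2 j)
    (A : Finset ℕ) (hAX : A ⊆ Finset.Icc 2 n) (hAcard : A.card = a)
    (hAnot : A ∉ lexFam (Finset.Icc 2 n) P a) :
    ∃ B ∈ lexFam (Finset.Icc 2 n) Q b, A ∩ B = ∅ := by
  have hPX : P ∩ Finset.Icc 2 n = P := inter_eq_left.mpr hP
  have hQX : Q ∩ Finset.Icc 2 n = Q := inter_eq_left.mpr hQ
  have hmem : A ∈ (Finset.Icc 2 n).powersetCard a := mem_powersetCard.mpr ⟨hAX, hAcard⟩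
  rw [lexFam, mem_filter, hPX] at hAnot
  push_neg at hAnot
  obtain ⟨h1, h2⟩ := hAnot hmem
  have hPA : (P \ A).Nonempty := sdiff_nonempty.mpr h1
  set i := (P \ A).min' hPA with hi
  have hiPA : i ∈ P \ A := min'_mem _ _
  have hiP : i ∈ P := (mem_sdiff.mp hiPA).1
  have hiA : i ∉ A := (mem_sdiff.mp hiPA).2
  have hjPQ : j ∈ P ∩ Q := by rw [hPQ]; exact mem_singleton_self j
  have hjP : j ∈ P := (mem_inter.mp hjPQ).1
  have hjQ : j ∈ Q := (mem_inter.mp hjPQ).2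
  have hPj : P ⊆ Finset.Icc 2 j := hU ▸ subset_union_left
  have hQj : Q ⊆ Finset.Icc 2 j := hU ▸ subset_union_right
  have hij : i ≤ j := (mem_Icc.mp (hPj hiP)).2
  -- A \ P nonempty
  have hAP : (A \ P).Nonempty := by
    rw [sdiff_nonempty]
    intro h
    have : A = P := eq_of_subset_of_card_le h (by omega)
    exact h1 (this ▸ Subset.refl A)
  have hmin2 : i ≤ (A \ P).min' hAP := by
    rw [hi]
    have := h2
    rw [← coe_min' hPA, ← coe_min' hAP, WithTop.coe_le_coe] at this
    exact this
  have hkey : ∀ x ∈ A, x < i → x ∈ P := by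
    intro x hx hxi
    by_contra hxP
    have : (A \ P).min' hAP ≤ x := min'_le _ _ (mem_sdiff.mpr ⟨hx, hxP⟩)
    omega
  have hiQ : i ∈ Q → i = j := fun h =>
    mem_singleton.mp (hPQ ▸ mem_inter.mpr ⟨hiP, h⟩)
  set B₀ : Finset ℕ := Q.filter (· < i) ∪ {i} with hB₀
  have hB0A : ∀ x ∈ B₀, x ∉ A := by
    intro x hx hxA
    rcases mem_union.mp hx with hx | hx
    · obtain ⟨hxQ, hxi⟩ := mem_filter.mp hx
      have hxP : x ∈ P := hkey x hxA hxi
      have : x = j := mem_singleton.mp (hPQ ▸ mem_inter.mpr ⟨hxP, hxQ⟩)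
      omega
    · rw [mem_singleton.mp hx] at hxA; exact hiA hxA
  have hB0X : B₀ ⊆ Finset.Icc 2 n :=
    union_subset ((filter_subset _ _).trans hQ) (singleton_subset_iff.mpr (hP hiP))
  have hQcard : 1 ≤ Q.card := card_pos.mpr ⟨j, hjQ⟩
  have hfilsub : Q.filter (· < i) ⊆ Q.erase j := by
    intro x hx
    obtain ⟨hxQ, hxi⟩ := mem_filter.mp hx
    exact mem_erase.mpr ⟨by omega, hxQ⟩
  have hfilcard : (Q.filter (· < i)).card ≤ Q.card - 1 := by
    have := card_le_card hfilsub
    rwa [card_erase_of_mem hjQ] at this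
  have hB0b : B₀.card ≤ b := by
    rw [hB₀]
    have h3 := card_union_le (Q.filter (· < i)) ({i} : Finset ℕ)
    rw [card_singleton] at h3
    omega
  -- extras
  have hdisj : Disjoint A B₀ := disjoint_right.mpr hB0A
  have hcardU : (A ∪ B₀).card = a + B₀.card := by
    rw [card_union_of_disjoint hdisj, hAcard]
  have hsubU : A ∪ B₀ ⊆ Finset.Icc 2 n := union_subset hAX hB0X
  have hcard_avail : b - B₀.card ≤ ((Finset.Icc 2 n) \ (A ∪ B₀)).card := by
    rw [card_sdiff_of_subset hsubU, hcardU, Nat.card_Icc]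
    omega
  obtain ⟨E, hE, hEcard⟩ := Finset.exists_subset_card_eq hcard_avail
  set B : Finset ℕ := B₀ ∪ E with hB
  have hEdisj : ∀ x ∈ E, x ∉ A ∪ B₀ := fun x hx => (mem_sdiff.mp (hE hx)).2
  have hB0E : Disjoint B₀ E := by
    rw [disjoint_right]
    intro x hx hxB0
    exact hEdisj x hx (mem_union_right _ hxB0)
  have hAE : Disjoint A E := by
    rw [disjoint_right]
    intro x hx hxA
    exact hEdisj x hx (mem_union_left _ hxA)
  have hBcard : B.card = b := by
    rw [hB, card_union_of_disjoint hB0E, hEcard]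
    omega
  have hBX : B ⊆ Finset.Icc 2 n := union_subset hB0X (hE.trans sdiff_subset)
  have hiB : i ∈ B := mem_union_left _ (mem_union_right _ (mem_singleton_self i))
  have hAB : A ∩ B = ∅ := by
    rw [← disjoint_iff_inter_eq_empty, hB, disjoint_union_right]
    exact ⟨hdisj, hAE⟩
  refine ⟨B, ?_, hAB⟩
  rw [lexFam, mem_filter, hQX]
  refine ⟨mem_powersetCard.mpr ⟨hBX, hBcard⟩, ?_⟩
  by_cases hQB : Q ⊆ B
  · exact Or.inl hQB
  · right
    have hQBne : (Q \ B).Nonempty := sdiff_nonempty.mpr hQB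
    have hgt : ∀ q ∈ Q \ B, i < q := by
      intro q hq
      obtain ⟨hqQ, hqB⟩ := mem_sdiff.mp hq
      by_contra hle
      push_neg at hle
      rcases lt_or_eq_of_le hle with h | h
      · exact hqB (mem_union_left _ (mem_union_left _ (mem_filter.mpr ⟨hqQ, h⟩)))
      · exact hqB (h ▸ hiB)
    have hiQ' : i ∉ Q := by
      intro h
      have hijeq : i = j := hiQ h
      apply hQB
      intro x hxQ
      have hxj : x ≤ j := (mem_Icc.mp (hQj hxQ)).2
      rcases lt_or_eq_of_le hxj with h' | h'
      · exact mem_union_left _ (mem_union_left _ (mem_filter.mpr ⟨hxQ, by omega⟩))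
      · rw [h', ← hijeq]; exact hiB
    have hiBQ : i ∈ B \ Q := mem_sdiff.mpr ⟨hiB, hiQ'⟩
    have h4 : (B \ Q).min ≤ (i : WithTop ℕ) := min_le hiBQ
    have h5 : (i : WithTop ℕ) < (Q \ B).min := by
      rw [← coe_min' hQBne]
      exact WithTop.coe_lt_coe.mpr (hgt _ (min'_mem _ _))
    exact lt_of_le_of_lt h4 h5

/-- If nonempty `P, Q ⊆ [2,n]` with `|P| ≤ a`, `|Q| ≤ b`, `a + b ≤ n - 1`, strongly intersect
in their largest element (`P ∩ Q = {j}`, `P ∪ Q = [2,j]`), then `L([2,n],P,a)` and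
`L([2,n],Q,b)` form a maximal pair of cross-intersecting families. -/
theorem lex_maximal_cross_intersecting (n a b : ℕ) (ha : 0 < a) (hb : 0 < b)
    (hab : a + b ≤ n - 1)
    (P Q : Finset ℕ) (hP : P ⊆ Finset.Icc 2 n) (hQ : Q ⊆ Finset.Icc 2 n)
    (hPne : P.Nonempty) (hQne : Q.Nonempty) (hPa : P.card ≤ a) (hQb : Q.card ≤ b)
    (hstrong : ∃ j : ℕ, P ∩ Q = {j} ∧ P ∪ Q = Finset.Icc 2 j) :
    ∀ A' B' : Finset (Finset ℕ),
      A' ⊆ (Finset.Icc 2 n).powersetCard a → B' ⊆ (Finset.Icc 2 n).powersetCard b →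
      lexFam (Finset.Icc 2 n) P a ⊆ A' → lexFam (Finset.Icc 2 n) Q b ⊆ B' →
      (∀ A ∈ A', ∀ B ∈ B', (A ∩ B).Nonempty) →
      A' = lexFam (Finset.Icc 2 n) P a ∧ B' = lexFam (Finset.Icc 2 n) Q b := by
  intro A' B' hA'X hB'X hLA hLB hcross
  obtain ⟨j, hPQ, hU⟩ := hstrong
  constructor
  · refine Subset.antisymm ?_ hLA
    intro A hA
    by_contra hAnot
    obtain ⟨hAX, hAcard⟩ := mem_powersetCard.mp (hA'X hA)
    obtain ⟨B, hBmem, hAB⟩ := key_lemma n a b hab P Q hP hQ hPa hQb j hPQ hU A hAX hAcard hAnot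
    have := hcross A hA B (hLB hBmem)
    rw [hAB] at this
    exact not_nonempty_empty this
  · refine Subset.antisymm ?_ hLB
    intro B hB
    by_contra hBnot
    obtain ⟨hBX, hBcard⟩ := mem_powersetCard.mp (hB'X hB)
    obtain ⟨C, hCmem, hBC⟩ := key_lemma n b a (by omega) Q P hQ hP hQb hPa j
      (by rw [inter_comm]; exact hPQ) (by rw [union_comm]; exact hU) B hBX hBcard hBnot
    have := hcross C (hLA hCmem) B hB
    rw [inter_comm, hBC] at this
    exact not_nonempty_empty this
end

section
/- Let a, b > 0, n > a + b, and let A ⊆ C([n],a), B ⊆ C([n],b) be cross-intersecting families. Set t = b + 1 - a. If |B| ≤ C(n-t, a-1), then |A| + |B| ≤ C(n,a), and the inequality is strict unless |B| = 0. -/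
open Finset Nat
open scoped FinsetFamily

namespace CrossIntAux

variable {α β : Type*}

lemma shadow_image [DecidableEq α] [DecidableEq β] (e : α ↪ β) (𝒜 : Finset (Finset α)) :
    ∂ (𝒜.image fun s => s.map e) = (∂ 𝒜).image fun s => s.map e := by
  ext t
  simp only [Finset.mem_shadow_iff, Finset.mem_image]
  constructor
  · rintro ⟨s', ⟨s, hs, rfl⟩, x, hx, rfl⟩
    rw [Finset.mem_map] at hx
    obtain ⟨y, hy, rfl⟩ := hx
    exact ⟨s.erase y, ⟨s, hs, y, hy, rfl⟩, Finset.map_erase e s y⟩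
  · rintro ⟨t', ⟨s, hs, y, hy, rfl⟩, rfl⟩
    exact ⟨s.map e, ⟨s, hs, rfl⟩, e y, Finset.mem_map_of_mem e hy, (Finset.map_erase e s y).symm⟩

lemma shadow_iterate_image [DecidableEq α] [DecidableEq β] (e : α ↪ β) (k : ℕ)
    (𝒜 : Finset (Finset α)) :
    ∂^[k] (𝒜.image fun s => s.map e) = (∂^[k] 𝒜).image fun s => s.map e := by
  induction k generalizing 𝒜 with
  | zero => rfl
  | succ k ih =>
    rw [Function.iterate_succ_apply, Function.iterate_succ_apply, shadow_image, ih]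

lemma exists_initSeg_card (n' r N : ℕ) (hN : N ≤ n'.choose r) :
    ∃ 𝒞 : Finset (Finset (Fin n')), Finset.Colex.IsInitSeg 𝒞 r ∧ 𝒞.card = N := by
  obtain ⟨d, hd⟩ : ∃ d, N + d = n'.choose r := ⟨n'.choose r - N, by omega⟩
  clear hN
  induction d generalizing N with
  | zero =>
    refine ⟨powersetCard r (univ : Finset (Fin n')), ⟨?_, ?_⟩, ?_⟩
    · exact fun s hs => (mem_powersetCard.1 hs).2
    · exact fun s t _ ht => mem_powersetCard.2 ⟨subset_univ _, ht.2⟩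
    · rw [card_powersetCard, Finset.card_fin]
      omega
  | succ d ih =>
    obtain ⟨𝒞, h1, h2⟩ := ih (N + 1) (by omega)
    have hne : 𝒞.Nonempty := card_pos.1 (by omega)
    obtain ⟨s, hs, rfl⟩ := h1.exists_initSeg hne
    refine ⟨(Colex.initSeg s).erase s, ⟨?_, ?_⟩, ?_⟩
    · exact fun t ht => h1.1 (mem_of_mem_erase ht)
    · rintro u t hu ⟨hlt, htr⟩
      have hu' := mem_of_mem_erase hu
      have htm : t ∈ Colex.initSeg s := h1.2 hu' ⟨hlt, htr⟩
      refine mem_erase.2 ⟨?_, htm⟩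
      rintro rfl
      exact absurd ((Colex.mem_initSeg.1 hu').2.trans_lt hlt) (lt_irrefl _)
    · rw [card_erase_of_mem Colex.mem_initSeg_self, h2]
      omega

/-- Local LYM with an effective ground set `R`. -/
lemma lym' [DecidableEq α] {𝒜 : Finset (Finset α)} {k m : ℕ} (R : Finset α)
    (hk : 0 < k) (h𝒜 : (𝒜 : Set (Finset α)).Sized k) (hR : ∀ s ∈ 𝒜, s ⊆ R) (hRm : R.card ≤ m) :
    𝒜.card * k ≤ (∂ 𝒜).card * (m - (k - 1)) := by
  classical
  refine card_mul_le_card_mul' (· ⊆ ·) (fun s hs => ?_) (fun t ht => ?_)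
  · rw [← h𝒜 hs, ← Finset.card_image_of_injOn s.erase_injOn]
    refine card_le_card ?_
    simp_rw [image_subset_iff, mem_bipartiteBelow]
    exact fun a ha => ⟨erase_mem_shadow hs ha, erase_subset _ _⟩
  · obtain ⟨s₀, hs₀, hts₀⟩ := exists_subset_of_mem_shadow ht
    have htR : t ⊆ R := hts₀.trans (hR _ hs₀)
    have htcard : t.card = k - 1 := Set.Sized.shadow h𝒜 ht
    calc (𝒜.bipartiteAbove (· ⊆ ·) t).card
        ≤ ((R \ t).image fun a => insert a t).card := by
          refine card_le_card ?_
          intro u hu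
          rw [mem_bipartiteAbove] at hu
          have hins : ∃ a ∉ t, insert a t = u :=
            exists_eq_insert_iff.2 ⟨hu.2, by rw [h𝒜 hu.1, htcard]; omega⟩
          obtain ⟨a, hat, rfl⟩ := hins
          exact mem_image.2 ⟨a, mem_sdiff.2 ⟨hR _ hu.1 (mem_insert_self a t), hat⟩, rfl⟩
      _ ≤ (R \ t).card := card_image_le
      _ = R.card - t.card := card_sdiff_of_subset htR
      _ ≤ m - (k - 1) := by rw [htcard]; omega

/-- The core shadow growth lemma: a nonempty family of `r`-sets of size at most
`(a+r-1).choose r` has strictly more than `|F|` sets in its `(r-a)`-iterated shadow. -/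
lemma core {n' : ℕ} {F : Finset (Finset (Fin n'))} {r a : ℕ} (ha : 0 < a) (har : a < r)
    (hne : F.Nonempty) (hF : (F : Set (Finset (Fin n'))).Sized r)
    (hcard : F.card ≤ (a + r - 1).choose r) :
    F.card < (∂^[r - a] F).card := by
  classical
  set m := a + r - 1 with hm
  have hFub : F.card ≤ n'.choose r := by
    calc F.card ≤ (powersetCard r (univ : Finset (Fin n'))).card :=
          card_le_card fun s hs => mem_powersetCard.2 ⟨subset_univ _, hF hs⟩
      _ = n'.choose r := by rw [card_powersetCard, Finset.card_fin]
  obtain ⟨𝒞, h𝒞init, h𝒞card⟩ := exists_initSeg_card n' r F.card hFub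
  have h𝒞ne : 𝒞.Nonempty := card_pos.1 (by rw [h𝒞card]; exact card_pos.2 hne)
  obtain ⟨s, hsr, rfl⟩ := h𝒞init.exists_initSeg h𝒞ne
  set R : Finset (Fin n') := univ.filter (fun x => (x : ℕ) < m) with hRdef
  have hRm : R.card ≤ m := by
    calc R.card = (R.image Fin.val).card := (Finset.card_image_of_injective _ Fin.val_injective).symm
      _ ≤ (range m).card := by
          refine card_le_card ?_
          intro y hy
          obtain ⟨x, hx, rfl⟩ := mem_image.1 hy
          simp only [hRdef, mem_filter] at hx
          exact mem_range.2 hx.2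
      _ = m := card_range m
  -- every member of the initial segment is inside R
  have hsubR : ∀ t ∈ Colex.initSeg s, t ⊆ R := by
    intro t ht x hx
    by_contra hxR
    have hmx : m ≤ (x : ℕ) := by
      simp only [hRdef, mem_filter, mem_univ, true_and, not_lt] at hxR
      exact hxR
    have hmn : m ≤ n' := hmx.trans x.isLt.le
    have hmR : m ≤ R.card := by
      have hsub : (univ : Finset (Fin m)).map (Fin.castLEEmb hmn) ⊆ R := by
        intro y hy
        obtain ⟨z, _, rfl⟩ := mem_map.1 hy
        simp [hRdef, z.isLt]
      calc m = ((univ : Finset (Fin m)).map (Fin.castLEEmb hmn)).card := by simp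
        _ ≤ R.card := card_le_card hsub
    have hRcard : R.card = m := le_antisymm hRm hmR
    have hsub2 : powersetCard r R ⊆ Colex.initSeg s := by
      intro u hu
      rw [mem_powersetCard] at hu
      have hut : toColex u < toColex t := by
        rw [Colex.toColex_lt_toColex_iff_exists_forall_lt]
        refine ⟨x, hx, fun hxu => hxR (hu.1 hxu), fun c hc _ => ?_⟩
        have : (c : ℕ) < m := by
          have := hu.1 hc
          simp only [hRdef, mem_filter] at this
          exact this.2
        exact Fin.lt_def.2 (lt_of_lt_of_le this hmx)
      have hts : toColex t ≤ toColex s := (Colex.mem_initSeg.1 ht).2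
      refine Colex.mem_initSeg.2 ⟨by rw [hsr, hu.2], (hut.trans_le hts).le⟩
    have htnot : t ∉ powersetCard r R := by
      intro hmem
      exact hxR ((mem_powersetCard.1 hmem).1 hx)
    have : m.choose r + 1 ≤ (Colex.initSeg s).card := by
      have h1 : (insert t (powersetCard r R)).card = m.choose r + 1 := by
        rw [card_insert_of_notMem htnot, card_powersetCard, hRcard]
      rw [← h1]
      exact card_le_card (insert_subset ht hsub2)
    omega
  -- iterated local LYM within R
  have h𝒞sized : ((Colex.initSeg s : Finset (Finset (Fin n'))) : Set (Finset (Fin n'))).Sized r :=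
    h𝒞init.1
  have hstep : ∀ j, j < r - a →
      (∂^[j] (Colex.initSeg s)).card * (r - j) ≤
        (∂^[j + 1] (Colex.initSeg s)).card * (m - (r - j - 1)) := by
    intro j hj
    have hsz : ((∂^[j] (Colex.initSeg s) : Finset (Finset (Fin n'))) :
        Set (Finset (Fin n'))).Sized (r - j) := h𝒞sized.shadow_iterate
    have hmem : ∀ t ∈ ∂^[j] (Colex.initSeg s), t ⊆ R := by
      intro t ht
      obtain ⟨u, hu, htu, _⟩ := mem_shadow_iterate_iff_exists_sdiff.1 ht
      exact htu.trans (hsubR u hu)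
    have := lym' R (show 0 < r - j by omega) hsz hmem hRm
    rwa [Function.iterate_succ_apply']
  have hmain : ∀ j, j ≤ r - a →
      (Colex.initSeg s).card * m.choose (r - j) ≤
        (∂^[j] (Colex.initSeg s)).card * m.choose r := by
    intro j hjle
    induction j with
    | zero => simp
    | succ j ih =>
      have hj : j < r - a := by omega
      have ihj := ih (by omega)
      have hk1 : 1 ≤ r - j := by omega
      have hkm : r - j ≤ m := by omega
      have hpos : 0 < m - (r - j - 1) := by omega
      refine Nat.le_of_mul_le_mul_right ?_ hpos
      have e1 : r - j - 1 + 1 = r - j := by omega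
      have hcs := Nat.choose_succ_right_eq m (r - j - 1)
      rw [e1] at hcs
      have e2 : r - (j + 1) = r - j - 1 := by omega
      calc (Colex.initSeg s).card * m.choose (r - (j + 1)) * (m - (r - j - 1))
          = (Colex.initSeg s).card * (m.choose (r - j - 1) * (m - (r - j - 1))) := by
            rw [e2]; ring
        _ = (Colex.initSeg s).card * m.choose (r - j) * (r - j) := by rw [← hcs]; ring
        _ ≤ (∂^[j] (Colex.initSeg s)).card * m.choose r * (r - j) :=
            Nat.mul_le_mul_right _ ihj
        _ = (∂^[j] (Colex.initSeg s)).card * (r - j) * m.choose r := by ring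
        _ ≤ (∂^[j + 1] (Colex.initSeg s)).card * (m - (r - j - 1)) * m.choose r :=
            Nat.mul_le_mul_right _ (hstep j hj)
        _ = (∂^[j + 1] (Colex.initSeg s)).card * m.choose r * (m - (r - j - 1)) := by ring
  have hlast := hmain (r - a) le_rfl
  have hra : r - (r - a) = a := by omega
  rw [hra] at hlast
  -- binomial comparisons
  have ham : a ≤ m := by omega
  have hsymm : m.choose r = m.choose (a - 1) := by
    have e3 : m - (a - 1) = r := by omega
    rw [← e3, Nat.choose_symm (by omega)]
  have hlt : m.choose (a - 1) < m.choose a := by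
    have e1 : a - 1 + 1 = a := by omega
    have hcs := Nat.choose_succ_right_eq m (a - 1)
    rw [e1] at hcs
    have e2 : m - (a - 1) = r := by omega
    rw [e2] at hcs
    have hpos : 0 < m.choose (a - 1) := Nat.choose_pos (by omega)
    have h1 : m.choose (a - 1) * a < m.choose a * a := by
      rw [hcs]
      exact mul_lt_mul_of_pos_left har hpos
    exact Nat.lt_of_mul_lt_mul_right h1
  have h𝒞pos : 0 < (Colex.initSeg s).card := by
    rw [h𝒞card]; exact card_pos.2 hne
  have hCine : (Colex.initSeg s).card * m.choose r < (∂^[r - a] (Colex.initSeg s)).card * m.choose r := by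
    calc (Colex.initSeg s).card * m.choose r
        = (Colex.initSeg s).card * m.choose (a - 1) := by rw [hsymm]
      _ < (Colex.initSeg s).card * m.choose a := by
          exact mul_lt_mul_of_pos_left hlt h𝒞pos
      _ ≤ _ := hlast
  have hfinal : (Colex.initSeg s).card < (∂^[r - a] (Colex.initSeg s)).card :=
    Nat.lt_of_mul_lt_mul_right hCine
  have hkk : (∂^[r - a] (Colex.initSeg s)).card ≤ (∂^[r - a] F).card :=
    Finset.iterated_kk hF (le_of_eq h𝒞card) h𝒞init
  omega

end CrossIntAux

open CrossIntAux

/-- Cross-intersecting families `A ⊆ C([n],a)`, `B ⊆ C([n],b)` with `n > a + b` and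
`|B| ≤ C(n-t, a-1)` where `t = b + 1 - a`, satisfy `|A| + |B| ≤ C(n,a)`, with equality
only when `B = ∅`. -/
theorem cross_intersecting_sum_bound (n a b : ℕ) (ha : 0 < a) (hb : 0 < b)
    (hab : a + b < n)
    (A B : Finset (Finset ℕ))
    (hA : A ⊆ (Finset.Icc 1 n).powersetCard a)
    (hB : B ⊆ (Finset.Icc 1 n).powersetCard b)
    (hcross : ∀ S ∈ A, ∀ T ∈ B, (S ∩ T).Nonempty)
    (hBsize : B.card ≤ (n - (b + 1 - a)).choose (a - 1)) :
    A.card + B.card ≤ n.choose a ∧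
      (A.card + B.card = n.choose a → B = ∅) := by
  classical
  have hIcc : (Finset.Icc 1 n).card = n := by rw [Nat.card_Icc]; omega
  have hpow : ((Finset.Icc 1 n).powersetCard a).card = n.choose a := by
    rw [card_powersetCard, hIcc]
  have key : B.Nonempty → A.card + B.card < n.choose a := by
    intro hBne
    have hbn : b < n := by omega
    have han : a < n - b := by omega
    set e : Fin n ↪ ℕ := ⟨fun x => (x : ℕ) + 1, fun x y h => Fin.val_injective (Nat.succ_injective h)⟩
      with he
    have hBsub : ∀ T ∈ B, T ⊆ Finset.Icc 1 n := fun T hT => (mem_powersetCard.1 (hB hT)).1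
    have hBcard' : ∀ T ∈ B, T.card = b := fun T hT => (mem_powersetCard.1 (hB hT)).2
    set F : Finset (Finset ℕ) := B.image (fun T => Finset.Icc 1 n \ T) with hFdef
    have hFcard : F.card = B.card := by
      refine Finset.card_image_of_injOn ?_
      intro T hT T' hT' hEq
      have h1 : Finset.Icc 1 n \ (Finset.Icc 1 n \ T) = T := Finset.sdiff_sdiff_eq_self (hBsub T hT)
      have h2 : Finset.Icc 1 n \ (Finset.Icc 1 n \ T') = T' := Finset.sdiff_sdiff_eq_self (hBsub T' hT')
      have hEq' : Finset.Icc 1 n \ T = Finset.Icc 1 n \ T' := hEq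
      rw [← h1, ← h2, hEq']
    have hFsub : ∀ S ∈ F, S ⊆ Finset.Icc 1 n := by
      intro S hS
      obtain ⟨T, _, rfl⟩ := mem_image.1 hS
      exact sdiff_subset
    have hFsized : (F : Set (Finset ℕ)).Sized (n - b) := by
      intro S hS
      obtain ⟨T, hT, rfl⟩ := mem_image.1 hS
      rw [card_sdiff_of_subset (hBsub T hT), hIcc, hBcard' T hT]
    have hFne : F.Nonempty := hBne.image _
    set ψ : Finset ℕ → Finset (Fin n) := fun T => univ.filter (fun x => (x : ℕ) + 1 ∈ T)
      with hψ
    set F₀ : Finset (Finset (Fin n)) := F.image ψ with hF₀def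
    have hMψ : ∀ T ∈ F, (ψ T).map e = T := by
      intro T hT
      ext y
      simp only [hψ, mem_map, mem_filter, mem_univ, true_and, he, Function.Embedding.coeFn_mk]
      constructor
      · rintro ⟨x, hx, rfl⟩
        exact hx
      · intro hy
        have hy' : 1 ≤ y ∧ y ≤ n := mem_Icc.1 (hFsub T hT hy)
        exact ⟨⟨y - 1, by omega⟩, by simpa [Nat.sub_add_cancel hy'.1] using hy,
          Nat.sub_add_cancel hy'.1⟩
    have hF₀img : F₀.image (fun s => s.map e) = F := by
      rw [hF₀def, image_image]
      calc F.image ((fun s => s.map e) ∘ ψ) = F.image id := image_congr fun T hT => hMψ T hT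
        _ = F := image_id
    have hinj : Function.Injective (fun s : Finset (Fin n) => s.map e) :=
      fun s t h => Finset.map_injective e h
    have hF₀card : F₀.card = F.card := by
      rw [← hF₀img, Finset.card_image_of_injective _ hinj]
    have hF₀sized : (F₀ : Set (Finset (Fin n))).Sized (n - b) := by
      intro S hS
      have hmem : S.map e ∈ F := by
        rw [← hF₀img]; exact mem_image_of_mem _ hS
      have := hFsized hmem
      rwa [card_map] at this
    have hF₀ne : F₀.Nonempty := hFne.image _
    have hF₀bound : F₀.card ≤ (a + (n - b) - 1).choose (n - b) := by
      rw [hF₀card, hFcard]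
      rcases le_or_gt a (b + 1) with hcase | hcase
      · have h1 : n - (b + 1 - a) = a + (n - b) - 1 := by omega
        have h2 : (a + (n - b) - 1).choose (a - 1) = (a + (n - b) - 1).choose (n - b) := by
          set M := a + (n - b) - 1 with hM
          have h3 : M - (a - 1) = n - b := by omega
          rw [← h3, Nat.choose_symm (by omega)]
        calc B.card ≤ (n - (b + 1 - a)).choose (a - 1) := hBsize
          _ = (a + (n - b) - 1).choose (n - b) := by rw [h1, h2]
      · calc B.card ≤ ((Finset.Icc 1 n).powersetCard b).card := card_le_card hB
          _ = n.choose b := by rw [card_powersetCard, hIcc]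
          _ = n.choose (n - b) := (Nat.choose_symm (by omega)).symm
          _ ≤ (a + (n - b) - 1).choose (n - b) := Nat.choose_le_choose _ (by omega)
    have hcore : F₀.card < (∂^[(n - b) - a] F₀).card :=
      core ha han hF₀ne hF₀sized hF₀bound
    have hshadow_eq : ∂^[(n - b) - a] F = (∂^[(n - b) - a] F₀).image (fun s => s.map e) := by
      rw [← hF₀img, shadow_iterate_image]
    have hGcard : (∂^[(n - b) - a] F).card = (∂^[(n - b) - a] F₀).card := by
      rw [hshadow_eq, Finset.card_image_of_injective _ hinj]
    set G : Finset (Finset ℕ) := ∂^[(n - b) - a] F with hGdef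
    have hBG : B.card < G.card := by
      rw [hGdef, hGcard, ← hFcard, ← hF₀card]
      exact hcore
    have hGsub : G ⊆ (Finset.Icc 1 n).powersetCard a := by
      intro t ht
      obtain ⟨S, hS, htS, _⟩ := mem_shadow_iterate_iff_exists_sdiff.1 ht
      refine mem_powersetCard.2 ⟨htS.trans (hFsub S hS), ?_⟩
      have hsz := hFsized.shadow_iterate (k := (n - b) - a) ht
      rw [hsz]
      omega
    have hdisj : Disjoint A G := by
      rw [disjoint_left]
      intro S hSA hSG
      obtain ⟨S', hS', hSS', _⟩ := mem_shadow_iterate_iff_exists_sdiff.1 hSG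
      obtain ⟨T, hT, rfl⟩ := mem_image.1 hS'
      obtain ⟨x, hx⟩ := hcross S hSA T hT
      have hx1 := mem_inter.1 hx
      have hx2 : x ∈ Finset.Icc 1 n \ T := hSS' hx1.1
      exact (mem_sdiff.1 hx2).2 hx1.2
    calc A.card + B.card < A.card + G.card := by omega
      _ = (A ∪ G).card := (card_union_of_disjoint hdisj).symm
      _ ≤ ((Finset.Icc 1 n).powersetCard a).card := card_le_card (union_subset hA hGsub)
      _ = n.choose a := hpow
  constructor
  · rcases B.eq_empty_or_nonempty with rfl | hBne
    · simpa using (card_le_card hA).trans hpow.le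
    · exact (key hBne).le
  · intro heq
    by_contra hBne'
    exact absurd heq (Nat.ne_of_lt (key (nonempty_iff_ne_empty.2 hBne')))
end

section
/- Let a, b > 0, n > a + b, t = b + 1 - a, and let A ⊆ C([n],a), B ⊆ C([n],b) be cross-intersecting. If C(n-j, b-j) ≤ |B| ≤ C(n-t, a-1) for some integer j ∈ [t, b], then |A| + |B| ≤ C(n,a) - C(n-j,a) + C(n-j, b-j). -/
open Finset Nat Finset.Colex

namespace CrossIntersecting

open scoped FinsetFamily



/-- monotone on first half -/
lemma choose_le_choose_half {x i j : ℕ} (hij : i ≤ j) (hj : 2 * j ≤ x) :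
    x.choose i ≤ x.choose j := by
  induction j with
  | zero => simp_all
  | succ k ih =>
    rcases Nat.lt_or_ge i (k+1) with h | h
    · refine le_trans (ih (by omega) (by omega)) (Nat.choose_le_succ_of_lt_half_left ?_)
      omega
    · have : i = k + 1 := by omega
      simp [this]

/-- reflected unimodality -/
lemma choose_le_choose_of_add_le {x p q : ℕ} (hpq : p ≤ q) (h : x ≤ p + q) :
    x.choose q ≤ x.choose p := by
  rcases Nat.lt_or_ge x q with hq | hq
  · rw [Nat.choose_eq_zero_of_lt hq]; exact Nat.zero_le _
  -- q ≤ x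
  have hsymm : x.choose q = x.choose (x - q) := (Nat.choose_symm hq).symm
  rcases le_or_gt (2 * p) x with hp | hp
  · -- p ≤ x/2 : increase from x - q to p
    rw [hsymm]
    exact choose_le_choose_half (by omega) hp
  · -- p > x/2 : use symmetry on p too
    have hpx : p ≤ x := le_trans hpq hq
    rw [hsymm, ← Nat.choose_symm hpx]
    exact choose_le_choose_half (by omega) (by omega)

/-- Fact F -/
lemma factF {a r k : ℕ} (ha : 1 ≤ a) (har : a ≤ r) :
    ∀ c, k ≤ c → c + 2 ≤ r + a → c.choose r + k.choose a ≤ c.choose a + k.choose r := by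
  intro c
  induction c with
  | zero => intro h1 _; interval_cases k; simp [Nat.choose_eq_zero_of_lt (by omega : 0 < r)] <;> omega
  | succ c ih =>
    intro hkc hc
    rcases Nat.lt_or_ge k (c+1) with h | h
    · have hkc' : k ≤ c := by omega
      have step : c.choose (r-1) ≤ c.choose (a-1) :=
        choose_le_choose_of_add_le (by omega) (by omega)
      have e1 : (c+1).choose r = c.choose (r-1) + c.choose r := by
        have : r = (r - 1) + 1 := by omega
        rw [this, Nat.choose_succ_succ]; simp
      have e2 : (c+1).choose a = c.choose (a-1) + c.choose a := by
        have : a = (a - 1) + 1 := by omega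
        rw [this, Nat.choose_succ_succ]; simp
      have := ih hkc' (by omega)
      omega
    · have : k = c + 1 := by omega
      subst this; omega




variable {α : Type*} [DecidableEq α]

lemma shadow_mem_subset_card {G : Finset α} {𝒜 : Finset (Finset α)} {ρ : ℕ}
    (h : ∀ s ∈ 𝒜, s ⊆ G ∧ s.card = ρ) :
    ∀ s ∈ ∂ 𝒜, s ⊆ G ∧ s.card = ρ - 1 := by
  intro s hs
  rw [mem_shadow_iff] at hs
  obtain ⟨t, ht, x, hx, rfl⟩ := hs
  obtain ⟨h1, h2⟩ := h t ht
  exact ⟨(erase_subset _ _).trans h1, by rw [card_erase_of_mem hx, h2]⟩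

lemma shadow_iter_mem_subset_card {G : Finset α} {𝒜 : Finset (Finset α)} {ρ : ℕ} (d : ℕ)
    (h : ∀ s ∈ 𝒜, s ⊆ G ∧ s.card = ρ) :
    ∀ s ∈ ∂^[d] 𝒜, s ⊆ G ∧ s.card = ρ - d := by
  induction d generalizing 𝒜 ρ with
  | zero => simpa using h
  | succ d ih =>
    rw [Function.iterate_succ_apply]
    intro s hs
    have := ih (shadow_mem_subset_card h) s hs
    exact ⟨this.1, by omega⟩

/-- Bounded local LYM with cancelled denominators. -/
lemma card_mul_le_card_shadow_mul_bounded {G : Finset α} {𝒜 : Finset (Finset α)} {ρ : ℕ}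
    (hρ : 1 ≤ ρ) (h : ∀ s ∈ 𝒜, s ⊆ G ∧ s.card = ρ) :
    𝒜.card * ρ ≤ (∂ 𝒜).card * (G.card - ρ + 1) := by
  classical
  refine card_mul_le_card_mul' (· ⊆ ·) (fun b hb => ?_) (fun t ht => ?_)
  · -- ∀ b ∈ 𝒜, ρ ≤ #((∂𝒜).bipartiteBelow (⊆) b)
    obtain ⟨hbG, hbc⟩ := h b hb
    calc ρ = (b.image b.erase).card := by
              rw [Finset.card_image_of_injOn (erase_injOn b), hbc]
      _ ≤ _ := by
              apply card_le_card
              intro t htm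
              obtain ⟨x, hx, rfl⟩ := mem_image.1 htm
              rw [mem_bipartiteBelow]
              exact ⟨erase_mem_shadow hb hx, erase_subset _ _⟩
  · -- ∀ t ∈ ∂𝒜, #(𝒜.bipartiteAbove (⊆) t) ≤ #G - ρ + 1
    obtain ⟨htG, htc⟩ := shadow_mem_subset_card h t ht
    by_cases hne : (𝒜.bipartiteAbove (· ⊆ ·) t).Nonempty
    · obtain ⟨b₀, hb₀⟩ := hne
      rw [mem_bipartiteAbove] at hb₀
      have hρG : ρ ≤ G.card := (h b₀ hb₀.1).2 ▸ card_le_card (h b₀ hb₀.1).1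
      have hsub : 𝒜.bipartiteAbove (· ⊆ ·) t ⊆ (G \ t).image (fun x => insert x t) := by
        intro b hbm
        rw [mem_bipartiteAbove] at hbm
        obtain ⟨hbA, htb⟩ := hbm
        obtain ⟨hbG, hbc⟩ := h b hbA
        have hcard : (b \ t).card = 1 := by
          rw [card_sdiff_of_subset htb, hbc, htc]; omega
        obtain ⟨x, hx⟩ := card_eq_one.1 hcard
        have hxb : x ∈ b \ t := hx ▸ mem_singleton_self x
        rw [mem_sdiff] at hxb
        refine mem_image.2 ⟨x, ?_, ?_⟩
        · exact mem_sdiff.2 ⟨hbG hxb.1, hxb.2⟩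
        · rw [insert_eq, union_comm, ← hx, union_sdiff_of_subset htb]
      calc (𝒜.bipartiteAbove (· ⊆ ·) t).card ≤ ((G \ t).image (fun x => insert x t)).card :=
            card_le_card hsub
        _ ≤ (G \ t).card := card_image_le
        _ = G.card - ρ + 1 := by rw [card_sdiff_of_subset htG, htc]; omega
    · rw [not_nonempty_iff_eq_empty.1 hne]; simp

/-- Iterated: sublemma M. Family of `ρ`-sets inside ground `G`, `#G + d ≤ 2ρ`:
iterated shadow is at least as large. -/
lemma le_card_shadow_iter_of_small_ground {G : Finset α} {𝒜 : Finset (Finset α)} {ρ d : ℕ}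
    (h : ∀ s ∈ 𝒜, s ⊆ G ∧ s.card = ρ) (hG : G.card + d ≤ 2 * ρ) :
    𝒜.card ≤ (∂^[d] 𝒜).card := by
  classical
  rcases 𝒜.eq_empty_or_nonempty with rfl | ⟨s₀, hs₀⟩
  · simp
  have hρG : ρ ≤ G.card := (h s₀ hs₀).2 ▸ card_le_card (h s₀ hs₀).1
  have hd : d ≤ ρ := by omega
  have key : ∀ i, i ≤ d →
      𝒜.card * ρ.descFactorial i ≤ (∂^[i] 𝒜).card * (G.card - ρ + i).descFactorial i := by
    intro i
    induction i with
    | zero => simp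
    | succ i ih =>
      intro hi
      have hiρ : i < ρ := by omega
      have hmem := shadow_iter_mem_subset_card i h
      have hloc : (∂^[i] 𝒜).card * (ρ - i) ≤ (∂^[i+1] 𝒜).card * (G.card - (ρ - i) + 1) := by
        rw [Function.iterate_succ_apply']
        exact card_mul_le_card_shadow_mul_bounded (by omega) (by
          intro s hs; exact hmem s hs)
      have e1 : ρ.descFactorial (i+1) = (ρ - i) * ρ.descFactorial i := Nat.descFactorial_succ ρ i
      have e2 : (G.card - ρ + (i+1)).descFactorial (i+1)
          = (G.card - ρ + i + 1) * (G.card - ρ + i).descFactorial i := by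
        have : G.card - ρ + (i+1) = (G.card - ρ + i) + 1 := by omega
        rw [this, Nat.succ_descFactorial_succ]
      have e3 : G.card - (ρ - i) + 1 = G.card - ρ + i + 1 := by omega
      calc 𝒜.card * ρ.descFactorial (i+1) = (𝒜.card * ρ.descFactorial i) * (ρ - i) := by
              rw [e1]; ring
        _ ≤ ((∂^[i] 𝒜).card * (G.card - ρ + i).descFactorial i) * (ρ - i) :=
              Nat.mul_le_mul_right _ (ih (by omega))
        _ = ((∂^[i] 𝒜).card * (ρ - i)) * (G.card - ρ + i).descFactorial i := by ring
        _ ≤ ((∂^[i+1] 𝒜).card * (G.card - (ρ - i) + 1)) * (G.card - ρ + i).descFactorial i :=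
              Nat.mul_le_mul_right _ hloc
        _ = (∂^[i+1] 𝒜).card * (G.card - ρ + (i+1)).descFactorial (i+1) := by
              rw [e2, e3]; ring
  have hfin := key d le_rfl
  have hmono : (G.card - ρ + d).descFactorial d ≤ ρ.descFactorial d :=
    Nat.descFactorial_le _ (by omega)
  have hpos : 0 < ρ.descFactorial d := Nat.pos_of_ne_zero (fun hz => by
    have := Nat.descFactorial_eq_zero_iff_lt.1 hz; omega)
  have : 𝒜.card * ρ.descFactorial d ≤ (∂^[d] 𝒜).card * ρ.descFactorial d :=
    le_trans hfin (Nat.mul_le_mul_left _ hmono)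
  exact Nat.le_of_mul_le_mul_right this hpos




variable {n : ℕ}

/-- counting Fin-n elements with value in `[l, k)` -/
lemma card_filter_val_range (l k : ℕ) (hk : k ≤ n) :
    #(univ.filter (fun x : Fin n => l ≤ x.val ∧ x.val < k)) = k - l := by
  have himg : (univ.filter (fun x : Fin n => l ≤ x.val ∧ x.val < k)).image Fin.val
      = Ico l k := by
    ext m
    simp only [mem_image, mem_filter, mem_univ, true_and, mem_Ico]
    constructor
    · rintro ⟨x, ⟨h1, h2⟩, rfl⟩; exact ⟨h1, h2⟩
    · rintro ⟨h1, h2⟩; exact ⟨⟨m, by omega⟩, ⟨h1, h2⟩, rfl⟩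
  rw [← Nat.card_Ico l k, ← himg, Finset.card_image_of_injective _ Fin.val_injective]

/-- The decomposition of an initial segment at the maximum element. -/
lemma card_initSeg_decomp {s : Finset (Fin n)} (hs : s.Nonempty) :
    #(initSeg s) = Nat.choose ((s.max' hs : Fin n) : ℕ) #s
      + #(initSeg (s.erase (s.max' hs))) := by
  classical
  set M := s.max' hs with hM
  set P : Finset (Finset (Fin n)) := (univ.filter (fun x : Fin n => x < M)).powersetCard #s
    with hP
  set Q : Finset (Finset (Fin n)) := (initSeg (s.erase M)).image (insert M) with hQ
  have hMs : M ∈ s := s.max'_mem hs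
  have hems : ∀ y ∈ s.erase M, y < M := fun y hy => by
    rw [mem_erase] at hy
    exact lt_of_le_of_ne (s.le_max' y hy.2) hy.1
  have hsplit : initSeg s = P ∪ Q := by
    ext t
    simp only [hP, hQ, mem_union, mem_initSeg, mem_powersetCard, mem_image]
    constructor
    · rintro ⟨hcard, hle⟩
      by_cases hMt : M ∈ t
      · right
        refine ⟨t.erase M, ⟨?_, ?_⟩, insert_erase hMt⟩
        · rw [card_erase_of_mem hMt, card_erase_of_mem hMs, hcard]
        · have := (toColex_sdiff_le_toColex_sdiff
            (singleton_subset_iff.2 hMt) (singleton_subset_iff.2 hMs)).2 hle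
          simpa [sdiff_singleton_eq_erase] using this
      · left
        refine ⟨fun x hx => ?_, hcard.symm⟩
        rw [mem_filter]
        refine ⟨mem_univ _, ?_⟩
        have hxM : x ≤ M := forall_le_mono hle (fun b hb => s.le_max' b hb) x hx
        exact lt_of_le_of_ne hxM (fun h => hMt (h ▸ hx))
    · rintro (⟨hsub, hcard⟩ | ⟨t', ⟨hcard, hle⟩, rfl⟩)
      · -- t ⊆ Iio M
        have htM : ∀ x ∈ t, x < M := fun x hx => (mem_filter.1 (hsub hx)).2
        have hts : t ≠ s := fun h => absurd (htM M (h ▸ hMs)) (lt_irrefl M)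
        refine ⟨hcard.symm, le_of_lt ?_⟩
        rw [toColex_lt_toColex_iff_exists_forall_lt]
        exact ⟨M, hMs, fun h => absurd (htM M h) (lt_irrefl M), fun b hb _ => htM b hb⟩
      · -- t = insert M t'
        have hMt' : M ∉ t' := fun h =>
          absurd (forall_lt_mono hle hems M h) (lt_irrefl M)
        constructor
        · rw [card_insert_of_notMem hMt', ← hcard, card_erase_of_mem hMs]
          have : 1 ≤ #s := card_pos.2 hs
          omega
        · have : toColex (insert M t' \ {M}) ≤ toColex (insert M (s.erase M) \ {M}) := by
            rw [insert_sdiff_of_mem _ (mem_singleton_self M),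
              insert_sdiff_of_mem _ (mem_singleton_self M)]
            simpa [sdiff_singleton_eq_erase, erase_eq_of_notMem hMt',
              erase_eq_of_notMem (notMem_erase M s)] using hle
          have h2 := (toColex_sdiff_le_toColex_sdiff
            (singleton_subset_iff.2 (mem_insert_self M t'))
            (singleton_subset_iff.2 (mem_insert_self M (s.erase M)))).1 this
          rwa [insert_erase hMs] at h2
  have hdisj : Disjoint P Q := by
    rw [disjoint_left]
    intro t htP htQ
    rw [hP, mem_powersetCard] at htP
    rw [hQ, mem_image] at htQ
    obtain ⟨t', _, rfl⟩ := htQ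
    have := (mem_filter.1 (htP.1 (mem_insert_self M t'))).2
    exact absurd this (lt_irrefl M)
  have hPcard : #P = Nat.choose ((M : Fin n) : ℕ) #s := by
    rw [hP, card_powersetCard]
    congr 1
    have h2 : (univ.filter (fun x : Fin n => x < M))
        = (univ.filter (fun x : Fin n => 0 ≤ x.val ∧ x.val < (M : ℕ))) := by
      ext x
      simp only [mem_filter, mem_univ, true_and, Nat.zero_le]
      exact Fin.lt_iff_val_lt_val
    rw [h2, card_filter_val_range 0 (M : ℕ) (le_of_lt M.isLt)]
    omega
  have hQcard : #Q = #(initSeg (s.erase M)) := by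
    rw [hQ]
    apply Finset.card_image_of_injOn
    intro t₁ ht₁ t₂ ht₂ h
    have hM₁ : M ∉ t₁ := fun hh =>
      absurd (forall_lt_mono (mem_initSeg.1 ht₁).2 hems M hh) (lt_irrefl M)
    have hM₂ : M ∉ t₂ := fun hh =>
      absurd (forall_lt_mono (mem_initSeg.1 ht₂).2 hems M hh) (lt_irrefl M)
    have := congrArg (fun (w : Finset (Fin n)) => w.erase M) h
    simpa [erase_insert hM₁, erase_insert hM₂] using this
  rw [hsplit, card_union_of_disjoint hdisj, hPcard, hQcard]

/-- the "top" set of `[0,k)` with `r` elements: values in `[k-r, k)` -/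
def topSet (n k r : ℕ) : Finset (Fin n) :=
  univ.filter (fun x : Fin n => k - r ≤ x.val ∧ x.val < k)

lemma card_topSet (k r : ℕ) (hrk : r ≤ k) (hk : k ≤ n) : #(topSet n k r) = r := by
  rw [topSet, card_filter_val_range _ _ hk]
  omega

lemma le_topSet {t : Finset (Fin n)} {k r : ℕ} (hrk : r ≤ k) (hk : k ≤ n)
    (ht : #t = r) (hsub : ∀ x ∈ t, x.val < k) : toColex t ≤ toColex (topSet n k r) := by
  rcases eq_or_ne t (topSet n k r) with rfl | hne
  · exact le_refl _
  have hcards : #t = #(topSet n k r) := by rw [ht, card_topSet k r hrk hk]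
  have hdiff : (topSet n k r \ t).Nonempty := by
    rw [sdiff_nonempty]
    intro hsub2
    exact hne (Finset.eq_of_subset_of_card_le hsub2 (le_of_eq hcards)).symm
  obtain ⟨a, haw⟩ := hdiff
  rw [mem_sdiff] at haw
  apply le_of_lt
  rw [toColex_lt_toColex_iff_exists_forall_lt]
  refine ⟨a, haw.1, haw.2, fun b hb hbw => ?_⟩
  have hb1 : b.val < k := hsub b hb
  have hb2 : ¬ (k - r ≤ b.val ∧ b.val < k) := by
    intro hc
    exact hbw (mem_filter.2 ⟨mem_univ _, hc⟩)
  have ha1 : k - r ≤ a.val := (mem_filter.1 haw.1).2.1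
  rw [Fin.lt_iff_val_lt_val]
  omega

lemma le_topSet_iff {t : Finset (Fin n)} {k r : ℕ} (hr : 1 ≤ r) (hrk : r ≤ k) (hk : k ≤ n)
    (ht : #t = r) : toColex t ≤ toColex (topSet n k r) ↔ ∀ x ∈ t, x.val < k := by
  constructor
  · intro hle x hx
    have hbound : ∀ y ∈ topSet n k r, y.val < k := fun y hy => (mem_filter.1 hy).2.2
    -- use forall_le_mono with the max element of topSet
    have hne : (topSet n k r).Nonempty := by
      rw [← card_pos, card_topSet k r hrk hk]; omega
    have hmax := ((topSet n k r).max' hne).isLt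
    have := forall_le_mono (a := (topSet n k r).max' hne) hle
      (fun b hb => (topSet n k r).le_max' b hb) x hx
    have h2 : ((topSet n k r).max' hne).val < k := hbound _ ((topSet n k r).max'_mem hne)
    rw [Fin.le_iff_val_le_val] at this
    omega
  · exact le_topSet hrk hk ht

lemma card_initSeg_topSet (k r : ℕ) (hr : 1 ≤ r) (hrk : r ≤ k) (hk : k ≤ n) :
    #(initSeg (topSet n k r)) = k.choose r := by
  have : initSeg (topSet n k r)
      = (univ.filter (fun x : Fin n => x.val < k)).powersetCard r := by
    ext t
    rw [mem_initSeg, mem_powersetCard, card_topSet k r hrk hk]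
    constructor
    · rintro ⟨hc, hle⟩
      refine ⟨fun x hx => mem_filter.2 ⟨mem_univ _, ?_⟩, hc.symm⟩
      exact (le_topSet_iff hr hrk hk hc.symm).1 hle x hx
    · rintro ⟨hsub, hc⟩
      exact ⟨hc.symm, (le_topSet_iff hr hrk hk hc).2
        (fun x hx => (mem_filter.1 (hsub hx)).2)⟩
  rw [this, card_powersetCard]
  congr 1
  have h2 : (univ.filter (fun x : Fin n => x.val < k))
      = (univ.filter (fun x : Fin n => 0 ≤ x.val ∧ x.val < k)) := by
    ext x; simp
  rw [h2, card_filter_val_range 0 k hk]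
  omega

/-- Uniqueness of "top subsets" of a given size. -/
lemma topSubset_unique {s u₁ u₂ : Finset (Fin n)} (h₁ : u₁ ⊆ s) (h₂ : u₂ ⊆ s)
    (hp₁ : ∀ x ∈ s, x ∉ u₁ → ∀ y ∈ u₁, x < y) (hp₂ : ∀ x ∈ s, x ∉ u₂ → ∀ y ∈ u₂, x < y)
    (hc : #u₁ = #u₂) : u₁ = u₂ := by
  by_contra hne
  have hne₁ : (u₁ \ u₂).Nonempty := by
    rw [sdiff_nonempty]
    intro hsub
    exact hne (Finset.eq_of_subset_of_card_le hsub (le_of_eq hc.symm))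
  have hne₂ : (u₂ \ u₁).Nonempty := by
    rw [sdiff_nonempty]
    intro hsub
    exact hne (Finset.eq_of_subset_of_card_le hsub (le_of_eq hc)).symm
  obtain ⟨x, hx⟩ := hne₁
  obtain ⟨y, hy⟩ := hne₂
  rw [mem_sdiff] at hx hy
  have h1 : x < y := hp₂ x (h₁ hx.1) hx.2 y hy.1
  have h2 : y < x := hp₁ y (h₂ hy.1) hy.2 x hx.1
  exact absurd (h1.trans h2) (lt_irrefl x)

/-- Iterated shadow of an initial segment: peel off the `d` smallest elements. -/
lemma shadow_iter_initSeg : ∀ (d : ℕ) (s u : Finset (Fin n)), u ⊆ s → #s = #u + d →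
    (∀ x ∈ s, x ∉ u → ∀ y ∈ u, x < y) → ∂^[d] (initSeg s) = initSeg u := by
  intro d
  induction d with
  | zero =>
    intro s u hsub hcard _
    have : u = s := Finset.eq_of_subset_of_card_le hsub (by omega)
    rw [this]
    rfl
  | succ d ih =>
    intro s u hsub hcard hp
    have hs : s.Nonempty := by
      rw [← card_pos]; omega
    have hmin : s.min' hs ∉ u := by
      intro hmem
      have hdiff : (s \ u).Nonempty := by
        rw [sdiff_nonempty]
        intro hss
        have := card_le_card hss
        omega
      obtain ⟨x, hx⟩ := hdiff
      rw [mem_sdiff] at hx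
      have h1 : x < s.min' hs := hp x hx.1 hx.2 _ hmem
      have h2 : s.min' hs ≤ x := s.min'_le x hx.1
      omega
    have hstep : ∂ (initSeg s) = initSeg (s.erase (s.min' hs)) := shadow_initSeg hs
    rw [Function.iterate_succ_apply, hstep]
    apply ih
    · intro x hx
      rw [mem_erase]
      exact ⟨fun h => hmin (h ▸ hx), hsub hx⟩
    · rw [card_erase_of_mem (s.min'_mem hs)]
      omega
    · intro x hx hxu y hy
      rw [mem_erase] at hx
      exact hp x hx.2 hxu y hy

/-- Existence of an initial segment of any given size. -/
lemma exists_initSeg (r m : ℕ) (hr : r ≤ n) (hm : 1 ≤ m) (hM : m ≤ n.choose r) :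
    ∃ s₀ : Finset (Fin n), #s₀ = r ∧ #(initSeg s₀) = m := by
  classical
  set f : Finset (Fin n) → ℕ := fun s => #(initSeg s) with hf
  have hmono : ∀ s t : Finset (Fin n), #s = r → #t = r → toColex s < toColex t →
      f s < f t := by
    intro s t hsc htc hlt
    apply card_lt_card
    rw [ssubset_iff_of_subset]
    · exact ⟨t, mem_initSeg.2 ⟨rfl, le_refl _⟩, fun hmem =>
        absurd ((mem_initSeg.1 hmem).2) (not_le.2 hlt)⟩
    · intro x hx
      rw [mem_initSeg] at hx ⊢
      exact ⟨htc ▸ hsc ▸ hx.1, le_of_lt (lt_of_le_of_lt hx.2 hlt)⟩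
  have hinj : Set.InjOn f ((univ : Finset (Fin n)).powersetCard r) := by
    intro s hsP t htP hst
    rw [Finset.mem_coe, mem_powersetCard] at hsP htP
    rcases lt_trichotomy (toColex s) (toColex t) with h | h | h
    · exact absurd hst (Nat.ne_of_lt (hmono s t hsP.2 htP.2 h))
    · exact toColex_inj.1 h
    · exact absurd hst.symm (Nat.ne_of_lt (hmono t s htP.2 hsP.2 h))
  have himg : ((univ : Finset (Fin n)).powersetCard r).image f ⊆ Icc 1 (n.choose r) := by
    intro m' hm'
    obtain ⟨s, hsP, rfl⟩ := mem_image.1 hm'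
    rw [mem_powersetCard] at hsP
    rw [mem_Icc]
    constructor
    · have : s ∈ initSeg s := mem_initSeg_self
      exact card_pos.2 ⟨s, this⟩
    · calc #(initSeg s) ≤ #((univ : Finset (Fin n)).powersetCard r) := by
            apply card_le_card
            intro t ht
            rw [mem_initSeg] at ht
            rw [mem_powersetCard]
            exact ⟨subset_univ t, by rw [← ht.1, hsP.2]⟩
        _ = n.choose r := by rw [card_powersetCard, Finset.card_univ, Fintype.card_fin]
  have hcard : (((univ : Finset (Fin n)).powersetCard r).image f).card
      = #(Icc 1 (n.choose r)) := by
    rw [Finset.card_image_of_injOn hinj, card_powersetCard, Finset.card_univ, Fintype.card_fin,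
      Nat.card_Icc]
    omega
  have heq := Finset.eq_of_subset_of_card_le himg (le_of_eq hcard.symm)
  have hmem : m ∈ ((univ : Finset (Fin n)).powersetCard r).image f := by
    rw [heq, mem_Icc]; omega
  obtain ⟨s₀, hs₀, hfs₀⟩ := mem_image.1 hmem
  rw [mem_powersetCard] at hs₀
  exact ⟨s₀, hs₀.2, hfs₀⟩

/-- Bound on the maximum from segment size. -/
lemma max_lt_of_card_initSeg_le {s : Finset (Fin n)} (hs : s.Nonempty) {K : ℕ}
    (hK : #(initSeg s) ≤ K.choose #s) : ((s.max' hs : Fin n) : ℕ) < K := by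
  by_contra hc
  push_neg at hc
  have hdecomp := card_initSeg_decomp hs
  have h1 : 1 ≤ #(initSeg (s.erase (s.max' hs))) := card_pos.2 initSeg_nonempty
  have h2 : K.choose #s ≤ (((s.max' hs : Fin n) : ℕ)).choose #s := Nat.choose_le_choose _ hc
  omega

/-- The core Kruskal–Katona-based counting inequality for initial segments. -/
lemma core {s u : Finset (Fin n)} {r aa k : ℕ}
    (hu : u ⊆ s) (hp : ∀ x ∈ s, x ∉ u → ∀ y ∈ u, x < y)
    (hsc : #s = r) (huc : #u = aa)
    (ha : 1 ≤ aa) (har : aa ≤ r) (hrk : r ≤ k) (hkn : k ≤ n)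
    (hbound : ∀ x ∈ s, (x : ℕ) + 2 ≤ r + aa)
    (hlow : k.choose r ≤ #(initSeg s)) :
    #(initSeg s) + k.choose aa ≤ #(initSeg u) + k.choose r := by
  classical
  have hr : 1 ≤ r := le_trans ha har
  have hune : u.Nonempty := by rw [← card_pos]; omega
  have hsne : s.Nonempty := hune.mono hu
  -- the reference top set
  have hvle : toColex (topSet n k r) ≤ toColex s := by
    by_contra hcon
    push_neg at hcon
    have hsub : initSeg s ⊆ initSeg (topSet n k r) := by
      intro t ht
      rw [mem_initSeg] at ht ⊢
      exact ⟨by rw [card_topSet k r hrk hkn, ← ht.1, hsc],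
        le_of_lt (lt_of_le_of_lt ht.2 hcon)⟩
    have h1 : #(initSeg s) < #(initSeg (topSet n k r)) := by
      apply card_lt_card
      rw [ssubset_iff_of_subset hsub]
      exact ⟨topSet n k r, mem_initSeg_self, fun hmem =>
        absurd (mem_initSeg.1 hmem).2 (not_le.2 hcon)⟩
    rw [card_initSeg_topSet k r hr hrk hkn] at h1
    omega
  set M := s.max' hsne with hMdef
  rcases Nat.lt_or_ge (M : ℕ) k with hMk | hMk
  · -- s is contained in the first k values, so s = topSet n k r
    have hsk : ∀ x ∈ s, x.val < k := fun x hx =>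
      lt_of_le_of_lt (by exact_mod_cast s.le_max' x hx) hMk
    have hsle : toColex s ≤ toColex (topSet n k r) := le_topSet hrk hkn hsc hsk
    have hseq : s = topSet n k r := toColex_inj.1 (le_antisymm hsle hvle)
    have haak : aa ≤ k := le_trans har hrk
    -- u is the top aa-subset
    have htsub : topSet n k aa ⊆ s := by
      intro x hx
      rw [topSet, mem_filter] at hx
      rw [hseq, topSet, mem_filter]
      exact ⟨mem_univ _, by omega, hx.2.2⟩
    have htp : ∀ x ∈ s, x ∉ topSet n k aa → ∀ y ∈ topSet n k aa, x < y := by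
      intro x hx hxt y hy
      rw [hseq, topSet, mem_filter] at hx
      rw [topSet, mem_filter] at hy
      have hxval : ¬ (k - aa ≤ x.val ∧ x.val < k) := fun hc =>
        hxt (mem_filter.2 ⟨mem_univ _, hc⟩)
      rw [Fin.lt_iff_val_lt_val]
      omega
    have hueq : u = topSet n k aa :=
      topSubset_unique hu htsub hp htp
        (by rw [huc, card_topSet k aa haak hkn])
    have hs1 : #(initSeg s) = k.choose r := by
      rw [hseq, card_initSeg_topSet k r hr hrk hkn]
    have hu1 : #(initSeg u) = k.choose aa := by
      rw [hueq, card_initSeg_topSet k aa ha haak hkn]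
    omega
  · -- k ≤ M
    have hMu : M ∈ u := by
      by_contra hMu
      have h1 := hp M (s.max'_mem hsne) hMu (u.min' hune) (u.min'_mem hune)
      have h2 := s.le_max' (u.min' hune) (hu (u.min'_mem hune))
      rw [← hMdef] at h2
      omega
    have hMmaxu : u.max' hune = M := by
      apply le_antisymm
      · exact s.le_max' _ (hu (u.max'_mem hune))
      · exact u.le_max' M hMu
    have hds := card_initSeg_decomp hsne
    have hdu := card_initSeg_decomp hune
    rw [hMmaxu] at hdu
    rw [← hMdef] at hds
    rw [hsc] at hds
    rw [huc] at hdu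
    set s' := s.erase M with hs'
    set u' := u.erase M with hu'
    have hcM : (M : ℕ) + 2 ≤ r + aa := hbound M (s.max'_mem hsne)
    -- Fact F
    have hF := factF ha har (M : ℕ) hMk (by omega)
    -- sublemma M : #initSeg s' ≤ #initSeg u'
    have hsub' : u' ⊆ s' := fun x hx => by
      rw [hu', mem_erase] at hx
      rw [hs', mem_erase]
      exact ⟨hx.1, hu hx.2⟩
    have hp' : ∀ x ∈ s', x ∉ u' → ∀ y ∈ u', x < y := by
      intro x hx hxu y hy
      rw [hs', mem_erase] at hx
      rw [hu', mem_erase] at hy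
      have hxu2 : x ∉ u := fun hc => hxu (by rw [hu', mem_erase]; exact ⟨hx.1, hc⟩)
      exact hp x hx.2 hxu2 y hy.2
    have hsc' : #s' = r - 1 := by rw [hs', card_erase_of_mem (s.max'_mem hsne)]; omega
    have huc' : #u' = aa - 1 := by rw [hu', card_erase_of_mem hMu]; omega
    have hMsub : #(initSeg s') ≤ #(initSeg u') := by
      rcases Nat.eq_or_lt_of_le har with har' | har'
      · -- aa = r : u = s
        have heq : u = s := Finset.eq_of_subset_of_card_le hu (by omega)
        rw [hs', hu', heq]
      · -- aa < r, use the LYM chain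
        have hshad : ∂^[r - aa] (initSeg s') = initSeg u' :=
          shadow_iter_initSeg (r - aa) s' u' hsub' (by omega) hp'
        rw [← hshad]
        have hGc : #(univ.filter (fun x : Fin n => x.val < (M : ℕ))) = (M : ℕ) := by
          have h2 : (univ.filter (fun x : Fin n => x.val < (M : ℕ)))
              = (univ.filter (fun x : Fin n => 0 ≤ x.val ∧ x.val < (M : ℕ))) := by
            ext x; simp
          rw [h2, card_filter_val_range 0 (M : ℕ) (le_of_lt M.isLt)]
          omega
        refine le_card_shadow_iter_of_small_ground
          (G := univ.filter (fun x : Fin n => x.val < (M : ℕ))) (ρ := r - 1)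
          (fun t ht => ?_) (by rw [hGc]; omega)
        rw [mem_initSeg] at ht
        constructor
        · intro x hx
          rw [mem_filter]
          refine ⟨mem_univ _, ?_⟩
          have hbnd : ∀ y ∈ s', y < M := fun y hy => by
            rw [hs', mem_erase] at hy
            exact lt_of_le_of_ne (s.le_max' y hy.2) hy.1
          exact forall_lt_mono ht.2 hbnd x hx
        · omega
    omega


/-- Existence of a top subset of any size. -/
lemma exists_topSubset {α : Type*} [LinearOrder α] [DecidableEq α] :
    ∀ (c : ℕ) (s : Finset α), c ≤ #s →
    ∃ u ⊆ s, #u = c ∧ ∀ x ∈ s, x ∉ u → ∀ y ∈ u, x < y := by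
  intro c
  induction c with
  | zero => intro s _; exact ⟨∅, empty_subset _, card_empty, by simp⟩
  | succ c ih =>
    intro s hc
    have hsne : s.Nonempty := by rw [← card_pos]; omega
    set M := s.max' hsne with hM
    obtain ⟨u', hu'sub, hu'c, hu'p⟩ := ih (s.erase M)
      (by rw [card_erase_of_mem (s.max'_mem hsne)]; omega)
    have hMu' : M ∉ u' := fun h => (notMem_erase M s) (hu'sub h)
    refine ⟨insert M u', ?_, ?_, ?_⟩
    · intro x hx
      rcases mem_insert.1 hx with rfl | h
      · exact s.max'_mem hsne
      · exact (erase_subset _ _) (hu'sub h)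
    · rw [card_insert_of_notMem hMu', hu'c]
    · intro x hx hxu y hy
      have hxM : x ≠ M := fun h => hxu (h ▸ mem_insert_self M u')
      have hxe : x ∈ s.erase M := mem_erase.2 ⟨hxM, hx⟩
      rcases mem_insert.1 hy with rfl | h
      · exact lt_of_le_of_ne (s.le_max' x hx) hxM
      · exact hu'p x hxe (fun h2 => hxu (mem_insert.2 (Or.inr h2))) y h

/-- The main theorem, over `Fin n`. -/
theorem main_fin (n a b j : ℕ) (ha : 0 < a) (hb : 0 < b) (hab : a + b < n)
    (hj1 : b + 1 - a ≤ j) (hj2 : j ≤ b)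
    (A B : Finset (Finset (Fin n)))
    (hA : ∀ S ∈ A, #S = a) (hB : ∀ S ∈ B, #S = b)
    (hcross : ∀ S ∈ A, ∀ T ∈ B, (S ∩ T).Nonempty)
    (hBlow : (n - j).choose (b - j) ≤ #B)
    (hBhigh : #B ≤ (n - (b + 1 - a)).choose (a - 1)) :
    (#A : ℤ) + (#B : ℤ)
      ≤ (n.choose a : ℤ) - ((n - j).choose a : ℤ) + ((n - j).choose (b - j) : ℤ) := by
  classical
  set r := n - b with hr
  set k := n - j with hk
  set d := n - a - b with hd
  set m := #B with hm
  -- basic facts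
  have hbn : b < n := by omega
  have hsymm1 : k.choose (b - j) = k.choose r := by
    rw [← Nat.choose_symm (show b - j ≤ k by omega)]
    congr 1
    omega
  -- complement family
  set ℬ : Finset (Finset (Fin n)) := B.image compl with hℬ
  have hℬcard : #ℬ = m := by
    rw [hℬ]
    exact Finset.card_image_of_injective _ compl_injective
  have hℬsized : ∀ S ∈ ℬ, #S = r := by
    intro S hS
    obtain ⟨T, hT, rfl⟩ := mem_image.1 hS
    rw [Finset.card_compl, hB T hT, Fintype.card_fin]
  have hm1 : 1 ≤ m := le_trans (Nat.choose_pos (by omega)) hBlow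
  have hmC : m ≤ n.choose r := by
    rw [← hℬcard]
    calc #ℬ ≤ #((univ : Finset (Fin n)).powersetCard r) :=
          card_le_card (fun S hS => mem_powersetCard.2 ⟨subset_univ _, hℬsized S hS⟩)
      _ = n.choose r := by rw [card_powersetCard, Finset.card_univ, Fintype.card_fin]
  -- the initial segment of the same size
  obtain ⟨s₀, hs₀c, hs₀m⟩ := exists_initSeg r m (by omega) hm1 hmC
  -- Kruskal–Katona
  have hKK : #(∂^[d] (initSeg s₀)) ≤ #(∂^[d] ℬ) := by
    apply Finset.iterated_kk (r := r)
    · intro S hS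
      exact hℬsized S hS
    · rw [hs₀m, hℬcard]
    · have := isInitSeg_initSeg (s := s₀)
      rwa [hs₀c] at this
  -- the top subset
  obtain ⟨u, husub, huc, hup⟩ := exists_topSubset a s₀ (by omega)
  have hshad : ∂^[d] (initSeg s₀) = initSeg u :=
    shadow_iter_initSeg d s₀ u husub (by omega) hup
  -- bound on elements of s₀
  have hbound : ∀ x ∈ s₀, (x : ℕ) + 2 ≤ r + a := by
    rcases Nat.lt_or_ge b a with hba | hba
    · -- a ≥ b + 1 : automatic
      intro x _
      have := x.isLt
      omega
    · -- a ≤ b : from the upper bound on m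
      have hKb : m ≤ (r + a - 1).choose r := by
        have e1 : n - (b + 1 - a) = r + a - 1 := by omega
        have e2 : (r + a - 1).choose (a - 1) = (r + a - 1).choose r := by
          rw [← Nat.choose_symm (show a - 1 ≤ r + a - 1 by omega)]
          congr 1
          omega
        rw [← e2, ← e1]
        exact hBhigh
      have hs₀ne : s₀.Nonempty := by rw [← Finset.card_pos]; omega
      have hmax := max_lt_of_card_initSeg_le hs₀ne (K := r + a - 1)
        (by rw [hs₀m, hs₀c]; exact hKb)
      intro x hx
      have := s₀.le_max' x hx
      rw [Fin.le_iff_val_le_val] at this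
      omega
  -- CORE
  have hcore : #(initSeg s₀) + k.choose a ≤ #(initSeg u) + k.choose r := by
    apply core husub hup hs₀c huc ha (by omega) (by omega) (by omega) hbound
    rw [hs₀m, ← hsymm1]
    exact hBlow
  -- Disjointness: A and the iterated shadow of ℬ
  have hdisj : Disjoint A (∂^[d] ℬ) := by
    rw [disjoint_left]
    intro t htA htS
    rw [mem_shadow_iterate_iff_exists_sdiff] at htS
    obtain ⟨C, hC, htC, _⟩ := htS
    obtain ⟨T, hT, rfl⟩ := mem_image.1 hC
    obtain ⟨x, hx⟩ := hcross t htA T hT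
    rw [mem_inter] at hx
    exact absurd (htC hx.1) (by simp [hx.2])
  have hshadsized : ∀ t ∈ ∂^[d] ℬ, #t = a := by
    intro t ht
    rw [mem_shadow_iterate_iff_exists_sdiff] at ht
    obtain ⟨C, hC, htC, hcd⟩ := ht
    have h1 := hℬsized C hC
    have h2 : #(C \ t) = #C - #t := card_sdiff_of_subset htC
    have h3 : #t ≤ #C := card_le_card htC
    omega
  have hAbound : #A + #(∂^[d] ℬ) ≤ n.choose a := by
    rw [← card_union_of_disjoint hdisj]
    calc #(A ∪ ∂^[d] ℬ) ≤ #((univ : Finset (Fin n)).powersetCard a) := by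
          apply card_le_card
          intro t ht
          rcases mem_union.1 ht with h | h
          · exact mem_powersetCard.2 ⟨subset_univ _, hA t h⟩
          · exact mem_powersetCard.2 ⟨subset_univ _, hshadsized t h⟩
      _ = n.choose a := by rw [card_powersetCard, Finset.card_univ, Fintype.card_fin]
  -- put everything together
  have hchain : m + k.choose a ≤ #(∂^[d] ℬ) + k.choose r := by
    calc m + k.choose a = #(initSeg s₀) + k.choose a := by rw [hs₀m]
      _ ≤ #(initSeg u) + k.choose r := hcore
      _ = #(∂^[d] (initSeg s₀)) + k.choose r := by rw [hshad]
      _ ≤ #(∂^[d] ℬ) + k.choose r := by omega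
  have hfinal : #A + m + k.choose a ≤ n.choose a + k.choose r := by omega
  have hgoal : (#A : ℤ) + (m : ℤ) ≤ (n.choose a : ℤ) - (k.choose a : ℤ) + (k.choose r : ℤ) := by
    have := hfinal
    push_cast
    omega
  rw [hsymm1]
  exact hgoal

/-- transfer map from subsets of `[1,n]` to `Fin n`. -/
def toFinMap (n : ℕ) (S : Finset ℕ) : Finset (Fin n) :=
  univ.filter (fun x => x.val + 1 ∈ S)

lemma toFinMap_image {n : ℕ} {S : Finset ℕ} (hS : S ⊆ Finset.Icc 1 n) :
    (toFinMap n S).image (fun x : Fin n => x.val + 1) = S := by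
  ext m
  simp only [mem_image, toFinMap, mem_filter, mem_univ, true_and]
  constructor
  · rintro ⟨x, hx, rfl⟩; exact hx
  · intro hm
    have := mem_Icc.1 (hS hm)
    have hmm : m - 1 + 1 = m := by omega
    exact ⟨⟨m - 1, by omega⟩, by simp only [hmm]; exact hm, by simp only [hmm]⟩

lemma toFinMap_card {n : ℕ} {S : Finset ℕ} (hS : S ⊆ Finset.Icc 1 n) :
    #(toFinMap n S) = #S := by
  conv_rhs => rw [← toFinMap_image hS]
  rw [Finset.card_image_of_injective _ (fun x y h => by
    have : x.val = y.val := by omega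
    exact Fin.ext this)]

lemma toFinMap_injOn {n : ℕ} {S T : Finset ℕ} (hS : S ⊆ Finset.Icc 1 n)
    (hT : T ⊆ Finset.Icc 1 n) (h : toFinMap n S = toFinMap n T) : S = T := by
  rw [← toFinMap_image hS, ← toFinMap_image hT, h]

lemma toFinMap_inter {n : ℕ} (S T : Finset ℕ) :
    toFinMap n S ∩ toFinMap n T = toFinMap n (S ∩ T) := by
  ext x
  simp [toFinMap, and_assoc]

lemma toFinMap_nonempty {n : ℕ} {S : Finset ℕ} (hS : S ⊆ Finset.Icc 1 n)
    (h : S.Nonempty) : (toFinMap n S).Nonempty := by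
  obtain ⟨m, hm⟩ := h
  have := mem_Icc.1 (hS hm)
  have hmm : m - 1 + 1 = m := by omega
  exact ⟨⟨m - 1, by omega⟩, by
    simp only [toFinMap, mem_filter, mem_univ, true_and, hmm]
    exact hm⟩

end CrossIntersecting

open Finset

/-- Cross-intersecting families `A ⊆ C([n],a)`, `B ⊆ C([n],b)` with `n > a + b` and
`C(n-j,b-j) ≤ |B| ≤ C(n-t,a-1)` for some integer `j ∈ [t,b]`, where `t = b + 1 - a`,
satisfy `|A| + |B| ≤ C(n,a) - C(n-j,a) + C(n-j,b-j)`. -/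
theorem cross_intersecting_refined_bound (n a b j : ℕ) (ha : 0 < a) (hb : 0 < b)
    (hab : a + b < n)
    (hj1 : b + 1 - a ≤ j) (hj2 : j ≤ b)
    (A B : Finset (Finset ℕ))
    (hA : A ⊆ (Finset.Icc 1 n).powersetCard a)
    (hB : B ⊆ (Finset.Icc 1 n).powersetCard b)
    (hcross : ∀ S ∈ A, ∀ T ∈ B, (S ∩ T).Nonempty)
    (hBlow : (n - j).choose (b - j) ≤ B.card)
    (hBhigh : B.card ≤ (n - (b + 1 - a)).choose (a - 1)) :
    (A.card : ℤ) + (B.card : ℤ)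
      ≤ (n.choose a : ℤ) - ((n - j).choose a : ℤ) + ((n - j).choose (b - j) : ℤ) := by
  classical
  have hAmem : ∀ S ∈ A, S ⊆ Finset.Icc 1 n ∧ #S = a := by
    intro S hS
    have := mem_powersetCard.1 (hA hS)
    exact this
  have hBmem : ∀ S ∈ B, S ⊆ Finset.Icc 1 n ∧ #S = b := by
    intro S hS
    have := mem_powersetCard.1 (hB hS)
    exact this
  set A' : Finset (Finset (Fin n)) := A.image (CrossIntersecting.toFinMap n) with hA'
  set B' : Finset (Finset (Fin n)) := B.image (CrossIntersecting.toFinMap n) with hB'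
  have hA'card : #A' = #A := by
    rw [hA']
    apply Finset.card_image_of_injOn
    intro S hS T hT h
    exact CrossIntersecting.toFinMap_injOn (hAmem S hS).1 (hAmem T hT).1 h
  have hB'card : #B' = #B := by
    rw [hB']
    apply Finset.card_image_of_injOn
    intro S hS T hT h
    exact CrossIntersecting.toFinMap_injOn (hBmem S hS).1 (hBmem T hT).1 h
  have hmain := CrossIntersecting.main_fin n a b j ha hb hab hj1 hj2 A' B'
    (by
      intro S hS
      obtain ⟨T, hT, rfl⟩ := mem_image.1 hS
      rw [CrossIntersecting.toFinMap_card (hAmem T hT).1]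
      exact (hAmem T hT).2)
    (by
      intro S hS
      obtain ⟨T, hT, rfl⟩ := mem_image.1 hS
      rw [CrossIntersecting.toFinMap_card (hBmem T hT).1]
      exact (hBmem T hT).2)
    (by
      intro S hS T hT
      obtain ⟨S₀, hS₀, rfl⟩ := mem_image.1 hS
      obtain ⟨T₀, hT₀, rfl⟩ := mem_image.1 hT
      rw [CrossIntersecting.toFinMap_inter]
      apply CrossIntersecting.toFinMap_nonempty
      · exact fun x hx => (hAmem S₀ hS₀).1 (mem_inter.1 hx).1
      · exact hcross S₀ hS₀ T₀ hT₀)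
    (by rw [hB'card]; exact hBlow)
    (by rw [hB'card]; exact hBhigh)
  rw [hA'card, hB'card] at hmain
  exact hmain
end

section
/- Let k ≥ s, m ≥ k + s, k ≥ 4 be integers. Let H ⊆ C([m],s) be a family with covering number τ(H) = 2 that is minimal with respect to this property (no proper subfamily has covering number 2), and let F ⊆ C([m],k-1) be the maximal family cross-intersecting with H. Then |F| + |H| is uniquely maximized when H is isomorphic to T_2'(s) = {[s], [s+1,2s]}. -/
open Finset
def cnt (M : Finset ℕ) (b : ℕ) (W : Finset (Finset ℕ)) : ℕ :=
  ((M.powersetCard b).filter (fun B => ∀ A ∈ W, (B ∩ A).Nonempty)).card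

lemma miss_filter (M X : Finset ℕ) (b : ℕ) :
    (M.powersetCard b).filter (fun B => ¬ (B ∩ X).Nonempty) = (M \ X).powersetCard b := by
  ext B
  simp only [Finset.mem_filter, Finset.mem_powersetCard, Finset.subset_sdiff,
    Finset.not_nonempty_iff_eq_empty, ← Finset.disjoint_iff_inter_eq_empty]
  tauto

lemma miss_card (M X : Finset ℕ) (b : ℕ) (hX : X ⊆ M) :
    ((M.powersetCard b).filter (fun B => ¬ (B ∩ X).Nonempty)).card = (M.card - X.card).choose b := by
  rw [miss_filter, Finset.card_powersetCard, Finset.card_sdiff_of_subset hX]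


lemma hit_card (M X : Finset ℕ) (b : ℕ) (hX : X ⊆ M) :
    ((M.powersetCard b).filter (fun B => (B ∩ X).Nonempty)).card + (M.card - X.card).choose b
      = M.card.choose b := by
  rw [← miss_card M X b hX, Finset.card_filter_add_card_filter_not, Finset.card_powersetCard]

lemma two_disjoint (M A B : Finset ℕ) (b w : ℕ) (hA : A ⊆ M) (hB : B ⊆ M)
    (hAB : Disjoint A B) (hcA : A.card = w) (hcB : B.card = w) :
    cnt M b {A, B} + 2 * (M.card - w).choose b = M.card.choose b + (M.card - 2*w).choose b := by
  classical
  set P := M.powersetCard b with hP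
  have hcnt : cnt M b {A, B}
      = (P.filter (fun B' => (B' ∩ A).Nonempty ∧ (B' ∩ B).Nonempty)).card := by
    unfold cnt
    congr 1
    apply Finset.filter_congr
    intro B' _
    simp
  have h1 : (P.filter (fun B' => (B' ∩ A).Nonempty ∧ (B' ∩ B).Nonempty)).card
      + (P.filter (fun B' => ¬((B' ∩ A).Nonempty ∧ (B' ∩ B).Nonempty))).card = P.card :=
    Finset.card_filter_add_card_filter_not _
  have h3 : P.filter (fun B' => ¬((B' ∩ A).Nonempty ∧ (B' ∩ B).Nonempty))
      = P.filter (fun B' => ¬(B' ∩ A).Nonempty) ∪ P.filter (fun B' => ¬(B' ∩ B).Nonempty) := by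
    rw [← Finset.filter_or]
    apply Finset.filter_congr
    intro B' _
    constructor
    · exact fun h => not_and_or.mp h
    · exact fun h => not_and_or.mpr h
  have h2 : (P.filter (fun B' => ¬(B' ∩ A).Nonempty) ∪ P.filter (fun B' => ¬(B' ∩ B).Nonempty)).card
      + (P.filter (fun B' => ¬(B' ∩ A).Nonempty) ∩ P.filter (fun B' => ¬(B' ∩ B).Nonempty)).card
      = (P.filter (fun B' => ¬(B' ∩ A).Nonempty)).card + (P.filter (fun B' => ¬(B' ∩ B).Nonempty)).card :=
    Finset.card_union_add_card_inter _ _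
  have h4 : P.filter (fun B' => ¬(B' ∩ A).Nonempty) ∩ P.filter (fun B' => ¬(B' ∩ B).Nonempty)
      = P.filter (fun B' => ¬(B' ∩ (A ∪ B)).Nonempty) := by
    rw [← Finset.filter_and]
    apply Finset.filter_congr
    intro B' _
    rw [Finset.inter_union_distrib_left]
    simp only [Finset.Nonempty, Finset.mem_union, exists_or]
    tauto
  have mA := miss_card M A b hA
  have mB := miss_card M B b hB
  have mAB := miss_card M (A ∪ B) b (Finset.union_subset hA hB)
  have hu : (A ∪ B).card = 2 * w := by
    rw [Finset.card_union_of_disjoint hAB]; omega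
  rw [hu] at mAB
  rw [← hP] at mA mB mAB
  have hPc : P.card = M.card.choose b := Finset.card_powersetCard b M
  rw [h3] at h1
  rw [h4] at h2
  rw [hcA] at mA; rw [hcB] at mB
  rw [hcnt]
  omega

lemma bucket (M Z : Finset ℕ) (b : ℕ) (hb : 1 ≤ b) (hZM : Z ⊆ M) (z : ℕ) (hz : z ∈ Z)
    (p : Finset ℕ → Prop) [DecidablePred p] :
    ((M.powersetCard b).filter (fun B => B ∩ Z = {z} ∧ p (B \ Z))).card
      = (((M \ Z).powersetCard (b-1)).filter p).card := by
  classical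
  apply Finset.card_bij (fun B _ => B \ Z)
  · intro B hB
    simp only [Finset.mem_filter, Finset.mem_powersetCard] at hB ⊢
    obtain ⟨⟨hBM, hBc⟩, hBZ, hp⟩ := hB
    refine ⟨⟨Finset.sdiff_subset_sdiff hBM (le_refl _), ?_⟩, hp⟩
    have : (B ∩ Z).card + (B \ Z).card = B.card := Finset.card_inter_add_card_sdiff B Z
    rw [hBZ] at this
    simp at this
    omega
  · intro B1 h1 B2 h2 heq
    simp only [Finset.mem_filter, Finset.mem_powersetCard] at h1 h2
    have e1 : B1 = (B1 \ Z) ∪ (B1 ∩ Z) := (Finset.sdiff_union_inter B1 Z).symm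
    have e2 : B2 = (B2 \ Z) ∪ (B2 ∩ Z) := (Finset.sdiff_union_inter B2 Z).symm
    rw [e1, e2, heq, h1.2.1, h2.2.1]
  · intro B' hB'
    simp only [Finset.mem_filter, Finset.mem_powersetCard] at hB'
    obtain ⟨⟨hB'M, hB'c⟩, hp⟩ := hB'
    have hzB' : z ∉ B' := fun h => (Finset.mem_sdiff.mp (hB'M h)).2 hz
    have hdisj : B' ∩ Z = ∅ := by
      apply Finset.eq_empty_of_forall_notMem
      intro x hx
      exact (Finset.mem_sdiff.mp (hB'M (Finset.mem_inter.mp hx).1)).2 (Finset.mem_inter.mp hx).2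
    refine ⟨insert z B', ?_, ?_⟩
    · simp only [Finset.mem_filter, Finset.mem_powersetCard]
      have hiZ : insert z B' ∩ Z = {z} := by
        ext x
        simp only [Finset.mem_inter, Finset.mem_insert, Finset.mem_singleton]
        constructor
        · rintro ⟨(rfl | hx), hxZ⟩
          · rfl
          · exact absurd (Finset.mem_inter.mpr ⟨hx, hxZ⟩) (by rw [hdisj]; simp)
        · rintro rfl; exact ⟨Or.inl rfl, hz⟩
      have hsd : insert z B' \ Z = B' := by
        ext x
        simp only [Finset.mem_sdiff, Finset.mem_insert]
        constructor
        · rintro ⟨(rfl | hx), hxZ⟩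
          · exact absurd hz hxZ
          · exact hx
        · intro hx
          exact ⟨Or.inr hx, fun hxZ => absurd (Finset.mem_inter.mpr ⟨hx, hxZ⟩) (by rw [hdisj]; simp)⟩
      refine ⟨⟨?_, ?_⟩, hiZ, by rw [hsd]; exact hp⟩
      · intro x hx
        rcases Finset.mem_insert.mp hx with rfl | hx
        · exact hZM hz
        · exact (Finset.mem_sdiff.mp (hB'M hx)).1
      · rw [Finset.card_insert_of_notMem hzB', hB'c]; omega
    · ext x
      simp only [Finset.mem_sdiff, Finset.mem_insert]
      constructor
      · rintro ⟨(rfl | hx), hxZ⟩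
        · exact absurd hz hxZ
        · exact hx
      · intro hx
        exact ⟨Or.inr hx, fun hxZ => absurd (Finset.mem_inter.mpr ⟨hx, hxZ⟩) (by rw [hdisj]; simp)⟩

lemma fiber_card (S : Finset (Finset ℕ)) (Z : Finset ℕ) (q : Finset ℕ → Prop) [DecidablePred q] :
    (S.filter (fun B => (B ∩ Z).card = 1 ∧ q B)).card
      = ∑ z ∈ Z, (S.filter (fun B => B ∩ Z = {z} ∧ q B)).card := by
  classical
  rw [← Finset.card_biUnion]
  · congr 1
    ext B
    simp only [Finset.mem_filter, Finset.mem_biUnion]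
    constructor
    · rintro ⟨hBS, hc, hq⟩
      obtain ⟨z, hz⟩ := Finset.card_eq_one.mp hc
      have hzZ : z ∈ Z := (Finset.mem_inter.mp (hz ▸ Finset.mem_singleton_self z)).2
      exact ⟨z, hzZ, hBS, hz, hq⟩
    · rintro ⟨z, hzZ, hBS, hz, hq⟩
      exact ⟨hBS, by rw [hz]; simp, hq⟩
  · intro z1 _ z2 _ hne
    apply Finset.disjoint_left.mpr
    intro B h1 h2
    simp only [Finset.mem_filter] at h1 h2
    have : ({z1} : Finset ℕ) = {z2} := by rw [← h1.2.1, h2.2.1]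
    exact hne (Finset.singleton_injective this)

lemma split3 (S : Finset (Finset ℕ)) (Z : Finset ℕ) :
    S.card = (S.filter (fun B => 2 ≤ (B ∩ Z).card)).card
      + (S.filter (fun B => (B ∩ Z).card = 1)).card
      + (S.filter (fun B => B ∩ Z = ∅)).card := by
  classical
  have h1 := Finset.card_filter_add_card_filter_not
    (s := S) (p := fun B => 2 ≤ (B ∩ Z).card)
  have h2 := Finset.card_filter_add_card_filter_not
    (s := S.filter (fun B => ¬ 2 ≤ (B ∩ Z).card)) (p := fun B => (B ∩ Z).card = 1)
  rw [Finset.filter_filter, Finset.filter_filter] at h2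
  have e1 : S.filter (fun B => ¬ 2 ≤ (B ∩ Z).card ∧ (B ∩ Z).card = 1)
      = S.filter (fun B => (B ∩ Z).card = 1) := by
    apply Finset.filter_congr; intro B _; constructor
    · exact fun h => h.2
    · exact fun h => ⟨by omega, h⟩
  have e2 : S.filter (fun B => ¬ 2 ≤ (B ∩ Z).card ∧ ¬ (B ∩ Z).card = 1)
      = S.filter (fun B => B ∩ Z = ∅) := by
    apply Finset.filter_congr; intro B _
    rw [← Finset.card_eq_zero]
    constructor
    · exact fun h => by omega
    · exact fun h => by omega
  rw [e1, e2] at h2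
  omega

lemma decomp (M : Finset ℕ) (W : Finset (Finset ℕ)) (b w r : ℕ) (zf : Finset ℕ → ℕ)
    (hb : 1 ≤ b) (hW : ∀ A ∈ W, A ⊆ M ∧ A.card = w) (hr : W.card = r) (hr2 : 2 ≤ r)
    (hzf : ∀ A ∈ W, zf A ∉ A ∧ ∀ B ∈ W, B ≠ A → zf A ∈ B) :
    cnt M b W + (M.card - r).choose b + r * ((M.card - r) - (w - (r-1))).choose (b-1)
      = M.card.choose b + cnt (M \ W.image zf) b (W.image (fun A => A \ W.image zf)) := by
  classical
  set Z := W.image zf with hZ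
  -- zf is injective on W
  have hinj : Set.InjOn zf W := by
    intro A1 h1 A2 h2 he
    by_contra hne
    have h' : zf A2 ∈ A1 := (hzf A2 h2).2 A1 h1 hne
    rw [← he] at h'
    exact (hzf A1 h1).1 h'
  have hZcard : Z.card = r := by
    rw [hZ, Finset.card_image_of_injOn hinj, hr]
  have hZM : Z ⊆ M := by
    intro z hzZ
    rw [hZ] at hzZ
    obtain ⟨A, hAW, rfl⟩ := Finset.mem_image.mp hzZ
    obtain ⟨B, hBW, hBA⟩ := Finset.exists_mem_ne (by omega : 1 < W.card) A
    exact (hW B hBW).1 ((hzf A hAW).2 B hBW hBA)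
  -- A ∩ Z = Z.erase (zf A)
  have hAZ : ∀ A ∈ W, A ∩ Z = Z.erase (zf A) := by
    intro A hAW
    ext x
    simp only [Finset.mem_inter, Finset.mem_erase]
    constructor
    · rintro ⟨hxA, hxZ⟩
      refine ⟨fun he => (hzf A hAW).1 (he ▸ hxA), hxZ⟩
    · rintro ⟨hne, hxZ⟩
      have hxZ' : x ∈ W.image zf := by rw [← hZ]; exact hxZ
      obtain ⟨A', hA'W, rfl⟩ := Finset.mem_image.mp hxZ'
      exact ⟨(hzf A' hA'W).2 A hAW (fun he => hne (congrArg zf he.symm)), hxZ⟩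
  have hAZcard : ∀ A ∈ W, (A ∩ Z).card = r - 1 := by
    intro A hAW
    rw [hAZ A hAW, Finset.card_erase_of_mem (hZ ▸ Finset.mem_image_of_mem zf hAW), hZcard]
  have hAsd : ∀ A ∈ W, (A \ Z).card = w - (r - 1) := by
    intro A hAW
    have := Finset.card_inter_add_card_sdiff A Z
    rw [hAZcard A hAW, (hW A hAW).2] at this
    have hle : r - 1 ≤ w := by
      have h2 : (A ∩ Z).card ≤ A.card := Finset.card_le_card Finset.inter_subset_left
      rw [hAZcard A hAW, (hW A hAW).2] at h2
      exact h2
    omega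
  -- two elements in B ∩ Z imply B hits everything
  have hit2 : ∀ B : Finset ℕ, 2 ≤ (B ∩ Z).card → ∀ A ∈ W, (B ∩ A).Nonempty := by
    intro B hc A hAW
    obtain ⟨z1, hz1, z2, hz2, hne⟩ := Finset.one_lt_card.mp (show 1 < (B ∩ Z).card by omega)
    have m1 : z1 ∈ W.image zf := by
      have := (Finset.mem_inter.mp hz1).2; rw [hZ] at this; exact this
    have m2 : z2 ∈ W.image zf := by
      have := (Finset.mem_inter.mp hz2).2; rw [hZ] at this; exact this
    obtain ⟨A1, hA1, he1⟩ := Finset.mem_image.mp m1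
    obtain ⟨A2, hA2, he2⟩ := Finset.mem_image.mp m2
    rcases eq_or_ne A A1 with rfl | hne1
    · refine ⟨z2, Finset.mem_inter.mpr ⟨(Finset.mem_inter.mp hz2).1, ?_⟩⟩
      exact he2 ▸ (hzf A2 hA2).2 A hAW (fun he => hne (by rw [← he1, ← he2, he]))
    · refine ⟨z1, Finset.mem_inter.mpr ⟨(Finset.mem_inter.mp hz1).1, ?_⟩⟩
      exact he1 ▸ (hzf A1 hA1).2 A hAW hne1
  set P := M.powersetCard b with hP
  set hitAll := fun B : Finset ℕ => ∀ A ∈ W, (B ∩ A).Nonempty with hhit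
  have hCs : cnt M b W = (P.filter hitAll).card := rfl
  -- split both P and the cnt-filter into three buckets
  have sC := split3 (P.filter hitAll) Z
  have sP := split3 P Z
  rw [Finset.filter_filter, Finset.filter_filter, Finset.filter_filter] at sC
  -- bucket (≥2) of C equals bucket (≥2) of P
  have eq2 : P.filter (fun B => hitAll B ∧ 2 ≤ (B ∩ Z).card)
      = P.filter (fun B => 2 ≤ (B ∩ Z).card) := by
    apply Finset.filter_congr
    intro B _
    exact ⟨fun h => h.2, fun h => ⟨fun A hA => hit2 B h A hA, h⟩⟩
  -- bucket (=0) of C equals the cnt over M \ Z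
  have eq0 : P.filter (fun B => hitAll B ∧ B ∩ Z = ∅)
      = ((M \ Z).powersetCard b).filter
          (fun B => ∀ A' ∈ W.image (fun A => A \ Z), (B ∩ A').Nonempty) := by
    ext B
    simp only [Finset.mem_filter, Finset.mem_powersetCard, hP, Finset.mem_image]
    constructor
    · rintro ⟨⟨hBM, hBc⟩, hhits, hBZ⟩
      have hBsub : B ⊆ M \ Z := by
        rw [Finset.subset_sdiff]
        exact ⟨hBM, Finset.disjoint_iff_inter_eq_empty.mpr hBZ⟩
      refine ⟨⟨hBsub, hBc⟩, ?_⟩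
      rintro A' ⟨A, hAW, rfl⟩
      have he : B ∩ (A \ Z) = B ∩ A := by
        ext x
        simp only [Finset.mem_inter, Finset.mem_sdiff]
        constructor
        · rintro ⟨hxB, hxA, _⟩; exact ⟨hxB, hxA⟩
        · rintro ⟨hxB, hxA⟩
          refine ⟨hxB, hxA, fun hxZ => ?_⟩
          have : x ∈ B ∩ Z := Finset.mem_inter.mpr ⟨hxB, hxZ⟩
          rw [hBZ] at this
          exact absurd this (Finset.notMem_empty x)
      rw [he]
      exact hhits A hAW
    · rintro ⟨⟨hBsub, hBc⟩, hhits⟩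
      rw [Finset.subset_sdiff] at hBsub
      refine ⟨⟨hBsub.1, hBc⟩, ?_, Finset.disjoint_iff_inter_eq_empty.mp hBsub.2⟩
      intro A hAW
      have h' := hhits (A \ Z) ⟨A, hAW, rfl⟩
      obtain ⟨x, hx⟩ := h'
      rw [Finset.mem_inter, Finset.mem_sdiff] at hx
      exact ⟨x, Finset.mem_inter.mpr ⟨hx.1, hx.2.1⟩⟩
  -- the (=1) bucket of C, fiberwise
  have fibC : ∀ z ∈ Z, (P.filter (fun B => B ∩ Z = {z} ∧ hitAll B)).card
      + ((M.card - r) - (w - (r-1))).choose (b-1) = (M.card - r).choose (b-1) := by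
    intro z hzZ
    have hzZ' : z ∈ W.image zf := by rw [← hZ]; exact hzZ
    obtain ⟨A, hAW, rfl⟩ := Finset.mem_image.mp hzZ'
    have econg : P.filter (fun B => B ∩ Z = {zf A} ∧ hitAll B)
        = P.filter (fun B => B ∩ Z = {zf A} ∧ ((B \ Z) ∩ (A \ Z)).Nonempty) := by
      apply Finset.filter_congr
      intro B _
      constructor
      · rintro ⟨hBZ, hhits⟩
        refine ⟨hBZ, ?_⟩
        obtain ⟨x, hx⟩ := hhits A hAW
        rw [Finset.mem_inter] at hx
        have hxZ : x ∉ Z := by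
          intro hxZ
          have : x ∈ B ∩ Z := Finset.mem_inter.mpr ⟨hx.1, hxZ⟩
          rw [hBZ, Finset.mem_singleton] at this
          exact (hzf A hAW).1 (this ▸ hx.2)
        exact ⟨x, Finset.mem_inter.mpr ⟨Finset.mem_sdiff.mpr ⟨hx.1, hxZ⟩,
          Finset.mem_sdiff.mpr ⟨hx.2, hxZ⟩⟩⟩
      · rintro ⟨hBZ, hne⟩
        refine ⟨hBZ, ?_⟩
        intro A' hA'W
        rcases eq_or_ne A' A with rfl | hne'
        · obtain ⟨x, hx⟩ := hne
          rw [Finset.mem_inter, Finset.mem_sdiff, Finset.mem_sdiff] at hx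
          exact ⟨x, Finset.mem_inter.mpr ⟨hx.1.1, hx.2.1⟩⟩
        · refine ⟨zf A, Finset.mem_inter.mpr ⟨?_, (hzf A hAW).2 A' hA'W hne'⟩⟩
          have : zf A ∈ B ∩ Z := by rw [hBZ]; exact Finset.mem_singleton_self _
          exact (Finset.mem_inter.mp this).1
    rw [econg, hP]
    rw [bucket M Z b hb hZM (zf A) hzZ (fun B' => (B' ∩ (A \ Z)).Nonempty)]
    have hsub : A \ Z ⊆ M \ Z := Finset.sdiff_subset_sdiff (hW A hAW).1 (le_refl _)
    have := hit_card (M \ Z) (A \ Z) (b-1) hsub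
    rw [Finset.card_sdiff_of_subset hZM, hZcard, hAsd A hAW] at this
    exact this
  -- sum the C fibers
  have hsumC : (P.filter (fun B => (B ∩ Z).card = 1 ∧ hitAll B)).card
      + r * ((M.card - r) - (w - (r-1))).choose (b-1) = r * (M.card - r).choose (b-1) := by
    rw [fiber_card P Z hitAll]
    have : ∑ z ∈ Z, ((P.filter (fun B => B ∩ Z = {z} ∧ hitAll B)).card
        + ((M.card - r) - (w - (r-1))).choose (b-1)) = ∑ z ∈ Z, (M.card - r).choose (b-1) :=
      Finset.sum_congr rfl (fun z hz => fibC z hz)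
    rw [Finset.sum_add_distrib, Finset.sum_const, Finset.sum_const, hZcard,
      smul_eq_mul, smul_eq_mul] at this
    exact this
  -- the (=1) bucket of P
  have hP1 : (P.filter (fun B => (B ∩ Z).card = 1)).card = r * (M.card - r).choose (b-1) := by
    have ec : P.filter (fun B => (B ∩ Z).card = 1)
        = P.filter (fun B => (B ∩ Z).card = 1 ∧ True) := by
      apply Finset.filter_congr; intro B _; simp
    rw [ec, fiber_card P Z (fun _ => True)]
    have each : ∀ z ∈ Z, (P.filter (fun B => B ∩ Z = {z} ∧ True)).card
        = (M.card - r).choose (b-1) := by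
      intro z hz
      have ec2 : P.filter (fun B => B ∩ Z = {z} ∧ True)
          = P.filter (fun B => B ∩ Z = {z} ∧ (fun _ : Finset ℕ => True) (B \ Z)) := by
        apply Finset.filter_congr; intro B _; simp
      rw [ec2, hP, bucket M Z b hb hZM z hz (fun _ => True)]
      rw [Finset.filter_true, Finset.card_powersetCard, Finset.card_sdiff_of_subset hZM, hZcard]
    rw [Finset.sum_congr rfl each, Finset.sum_const, hZcard, smul_eq_mul]
  -- the (=0) bucket of P
  have hP0 : (P.filter (fun B => B ∩ Z = ∅)).card = (M.card - r).choose b := by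
    have : P.filter (fun B => B ∩ Z = ∅) = (M \ Z).powersetCard b := by
      ext B
      simp only [Finset.mem_filter, Finset.mem_powersetCard, hP, Finset.subset_sdiff,
        ← Finset.disjoint_iff_inter_eq_empty]
      tauto
    rw [this, Finset.card_powersetCard, Finset.card_sdiff_of_subset hZM, hZcard]
  have hPcard : P.card = M.card.choose b := Finset.card_powersetCard b M
  -- put everything together
  rw [hCs]
  have hcnt' : cnt (M \ Z) b (W.image (fun A => A \ Z))
      = (P.filter (fun B => hitAll B ∧ B ∩ Z = ∅)).card := by
    rw [eq0]; rfl
  rw [hcnt']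
  have c1eq : (P.filter (fun B => hitAll B ∧ (B ∩ Z).card = 1)).card
      = (P.filter (fun B => (B ∩ Z).card = 1 ∧ hitAll B)).card := by
    congr 1
    apply Finset.filter_congr
    intro B _
    exact ⟨fun h => ⟨h.2, h.1⟩, fun h => ⟨h.2, h.1⟩⟩
  rw [eq2, c1eq] at sC
  omega

lemma chooseAdd' (c l : ℕ) :
    ∀ d j : ℕ, j + d ≤ l + 1 → (j + d).choose (c+1) ≤ j.choose (c+1) + d * l.choose c := by
  intro d
  induction d with
  | zero => intro j _; simp
  | succ d ih =>
    intro j hd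
    have h1 : j + (d+1) = (j + d) + 1 := by omega
    rw [h1, Nat.choose_succ_succ]
    simp only [Nat.succ_eq_add_one]
    have h2 : (j+d).choose c ≤ l.choose c := Nat.choose_le_choose _ (by omega)
    have h3 := ih j (by omega)
    have h4 : (d+1) * l.choose c = d * l.choose c + l.choose c := by ring
    omega

lemma chooseAdd (b l d j : ℕ) (hb : 1 ≤ b) (h : j + d ≤ l + 1) :
    (j + d).choose b ≤ j.choose b + d * l.choose (b-1) := by
  have hb' : b = (b-1) + 1 := by omega
  rw [hb']
  exact chooseAdd' (b-1) l d j h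

-- facts about the z-structure, reusable
lemma zfacts (M : Finset ℕ) (W : Finset (Finset ℕ)) (w r : ℕ) (zf : Finset ℕ → ℕ)
    (hW : ∀ A ∈ W, A ⊆ M ∧ A.card = w) (hr : W.card = r) (hr2 : 2 ≤ r)
    (hzf : ∀ A ∈ W, zf A ∉ A ∧ ∀ B ∈ W, B ≠ A → zf A ∈ B) :
    (W.image zf).card = r ∧ W.image zf ⊆ M ∧ r - 1 ≤ w ∧
      ∀ A ∈ W, (A \ W.image zf).card = w - (r-1) := by
  classical
  have hinj : Set.InjOn zf W := by
    intro A1 h1 A2 h2 he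
    by_contra hne
    have h' : zf A2 ∈ A1 := (hzf A2 h2).2 A1 h1 hne
    rw [← he] at h'
    exact (hzf A1 h1).1 h'
  have hZcard : (W.image zf).card = r := by rw [Finset.card_image_of_injOn hinj, hr]
  have hZM : W.image zf ⊆ M := by
    intro z hzZ
    obtain ⟨A, hAW, rfl⟩ := Finset.mem_image.mp hzZ
    obtain ⟨B, hBW, hBA⟩ := Finset.exists_mem_ne (by omega : 1 < W.card) A
    exact (hW B hBW).1 ((hzf A hAW).2 B hBW hBA)
  have hAZ : ∀ A ∈ W, A ∩ W.image zf = (W.image zf).erase (zf A) := by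
    intro A hAW
    ext x
    simp only [Finset.mem_inter, Finset.mem_erase]
    constructor
    · rintro ⟨hxA, hxZ⟩
      exact ⟨fun he => (hzf A hAW).1 (he ▸ hxA), hxZ⟩
    · rintro ⟨hne, hxZ⟩
      obtain ⟨A', hA'W, rfl⟩ := Finset.mem_image.mp hxZ
      exact ⟨(hzf A' hA'W).2 A hAW (fun he => hne (congrArg zf he.symm)), hxZ⟩
  have hAZcard : ∀ A ∈ W, (A ∩ W.image zf).card = r - 1 := by
    intro A hAW
    rw [hAZ A hAW, Finset.card_erase_of_mem (Finset.mem_image_of_mem zf hAW), hZcard]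
  have hrw : r - 1 ≤ w := by
    obtain ⟨A, hAW⟩ := Finset.card_pos.mp (by omega : 0 < W.card)
    have h2 : (A ∩ W.image zf).card ≤ A.card := Finset.card_le_card Finset.inter_subset_left
    rw [hAZcard A hAW, (hW A hAW).2] at h2
    exact h2
  refine ⟨hZcard, hZM, hrw, ?_⟩
  intro A hAW
  have := Finset.card_inter_add_card_sdiff A (W.image zf)
  rw [hAZcard A hAW, (hW A hAW).2] at this
  omega

lemma cnt_mono (M : Finset ℕ) (b : ℕ) (W W₀ : Finset (Finset ℕ)) (h : W₀ ⊆ W) :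
    cnt M b W ≤ cnt M b W₀ := by
  apply Finset.card_le_card
  intro B hB
  rw [Finset.mem_filter] at hB ⊢
  exact ⟨hB.1, fun A hA => hB.2 A (h hA)⟩

lemma main_bound : ∀ w : ℕ, ∀ W : Finset (Finset ℕ), ∀ M : Finset ℕ, ∀ b : ℕ,
    1 ≤ b → (∀ A ∈ W, A ⊆ M ∧ A.card = w) → (¬ ∃ x, ∀ A ∈ W, x ∈ A) → 2 * w ≤ M.card →
    cnt M b W + 2 * (M.card - w).choose b ≤ M.card.choose b + (M.card - 2*w).choose b := by
  intro w
  induction w using Nat.strong_induction_on with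
  | _ w ihw =>
    intro W
    induction W using Finset.strongInductionOn with
    | _ W ihW =>
      intro M b hb hW h2 hn
      classical
      by_cases hsub : ∃ W₀ ⊂ W, ¬ ∃ x, ∀ A ∈ W₀, x ∈ A
      · obtain ⟨W₀, hss, h2'⟩ := hsub
        have mono := cnt_mono M b W W₀ hss.subset
        have IH := ihW W₀ hss M b hb (fun A hA => hW A (hss.subset hA)) h2' hn
        omega
      · push_neg at hsub
        have hne : W.Nonempty := by
          rcases Finset.eq_empty_or_nonempty W with rfl | h
          · exact absurd ⟨0, fun A hA => absurd hA (Finset.notMem_empty A)⟩ h2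
          · exact h
        rcases Nat.eq_zero_or_pos w with rfl | hw
        · obtain ⟨A, hA⟩ := hne
          have hA0 : A = ∅ := Finset.card_eq_zero.mp (hW A hA).2
          have hc0 : cnt M b W = 0 := by
            rw [cnt, Finset.card_eq_zero, Finset.filter_eq_empty_iff]
            intro B _ hall
            have := hall A hA
            rw [hA0] at this
            simp at this
          rw [hc0]
          simp
          omega
        · -- w ≥ 1, extract z-structure from minimality
          have hz : ∀ A : Finset ℕ, ∃ z, A ∈ W → (z ∉ A ∧ ∀ B ∈ W, B ≠ A → z ∈ B) := by
            intro A
            by_cases hA : A ∈ W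
            · obtain ⟨x, hx⟩ := hsub (W.erase A) (Finset.erase_ssubset hA)
              refine ⟨x, fun _ => ⟨?_, ?_⟩⟩
              · intro hxA
                refine h2 ⟨x, fun B hB => ?_⟩
                rcases eq_or_ne B A with rfl | hBA
                · exact hxA
                · exact hx B (Finset.mem_erase.mpr ⟨hBA, hB⟩)
              · intro B hB hBA
                exact hx B (Finset.mem_erase.mpr ⟨hBA, hB⟩)
            · exact ⟨0, fun h => absurd h hA⟩
          choose zf hzf' using hz
          have hzf : ∀ A ∈ W, zf A ∉ A ∧ ∀ B ∈ W, B ≠ A → zf A ∈ B :=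
            fun A hA => hzf' A hA
          have hr2 : 2 ≤ W.card := by
            rcases Nat.lt_or_ge W.card 2 with h | h
            · interval_cases h' : W.card
              · exact absurd (Finset.card_eq_zero.mp h' ▸ hne) (by simp)
              · obtain ⟨A, hA⟩ := Finset.card_eq_one.mp h'
                have hAW : A ∈ W := hA ▸ Finset.mem_singleton_self A
                obtain ⟨x, hx⟩ := Finset.card_pos.mp (by rw [(hW A hAW).2]; omega)
                refine absurd ⟨x, fun B hB => ?_⟩ h2
                rw [hA, Finset.mem_singleton] at hB
                exact hB ▸ hx
            · exact h
          set r := W.card with hrdef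
          rcases eq_or_lt_of_le hr2 with hr2' | hr3
          · -- r = 2 : two disjoint sets, exact equality
            obtain ⟨A, B, hAB, hWAB⟩ := Finset.card_eq_two.mp hr2'.symm
            have hAW : A ∈ W := by rw [hWAB]; simp
            have hBW : B ∈ W := by rw [hWAB]; simp
            have hdisj : Disjoint A B := by
              rw [Finset.disjoint_left]
              intro x hxA hxB
              refine h2 ⟨x, fun C hC => ?_⟩
              rw [hWAB, Finset.mem_insert, Finset.mem_singleton] at hC
              rcases hC with rfl | rfl
              · exact hxA
              · exact hxB
            rw [hWAB]
            exact le_of_eq (two_disjoint M A B b w (hW A hAW).1 (hW B hBW).1 hdisj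
              (hW A hAW).2 (hW B hBW).2)
          · -- r ≥ 3
            obtain ⟨hZcard, hZM, hrw, hAsd⟩ := zfacts M W w r zf hW rfl hr2 hzf
            set Z := W.image zf with hZdef
            set W' := W.image (fun A => A \ Z) with hW'def
            have hrn : r ≤ M.card := hZcard ▸ Finset.card_le_card hZM
            have hW'facts : ∀ A' ∈ W', A' ⊆ M \ Z ∧ A'.card = w - (r-1) := by
              intro A' hA'
              obtain ⟨A, hAW, rfl⟩ := Finset.mem_image.mp hA'
              exact ⟨Finset.sdiff_subset_sdiff (hW A hAW).1 (le_refl _), hAsd A hAW⟩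
            have h2' : ¬ ∃ x, ∀ A' ∈ W', x ∈ A' := by
              rintro ⟨x, hx⟩
              refine h2 ⟨x, fun A hA => ?_⟩
              have := hx (A \ Z) (Finset.mem_image_of_mem _ hA)
              exact (Finset.mem_sdiff.mp this).1
            have hMZcard : (M \ Z).card = M.card - r := by
              rw [Finset.card_sdiff_of_subset hZM, hZcard]
            have hn' : 2 * (w - (r-1)) ≤ (M \ Z).card := by rw [hMZcard]; omega
            have IH := ihw (w - (r-1)) (by omega) W' (M \ Z) b hb hW'facts h2' hn'
            have D := decomp M W b w r zf hb hW rfl hr2 hzf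
            rw [← hZdef] at D
            rw [← hW'def] at D
            rw [hMZcard] at IH
            set n := M.card with hndef
            have e1 : (n - r) - (w - (r-1)) = n - w - 1 := by omega
            have e2 : (n - r) - 2 * (w - (r-1)) = (n - 2*w) + (r - 2) := by omega
            rw [e1] at D
            rw [e1, e2] at IH
            -- Pascal on (n-w).choose b
            have pas : (n - w).choose b = (n-w-1).choose (b-1) + (n-w-1).choose b := by
              have h1 : n - w = (n-w-1) + 1 := by omega
              have h2 : b = (b-1) + 1 := by omega
              rw [h1, h2, Nat.choose_succ_succ]
              simp [Nat.succ_eq_add_one]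
            have cA := chooseAdd b (n-w-1) (r-2) (n-2*w) hb (by omega)
            have mulsplit : r * (n-w-1).choose (b-1)
                = (r-2) * (n-w-1).choose (b-1) + 2 * (n-w-1).choose (b-1) := by
              have h3 : r = (r-2) + 2 := by omega
              nth_rewrite 1 [h3]
              rw [add_mul]
            omega

lemma main_bound_strict (M : Finset ℕ) (W : Finset (Finset ℕ)) (b w r : ℕ) (zf : Finset ℕ → ℕ)
    (hb : 3 ≤ b) (hW : ∀ A ∈ W, A ⊆ M ∧ A.card = w) (hr : W.card = r) (hr3 : 3 ≤ r)
    (hzf : ∀ A ∈ W, zf A ∉ A ∧ ∀ B ∈ W, B ≠ A → zf A ∈ B)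
    (h2 : ¬ ∃ x, ∀ A ∈ W, x ∈ A) (hn : 2 * w ≤ M.card) (hnb : w + b + 1 ≤ M.card) :
    cnt M b W + 2 * (M.card - w).choose b + (r - 1)
      ≤ M.card.choose b + (M.card - 2*w).choose b := by
  classical
  have hb1 : 1 ≤ b := by omega
  have hr2 : 2 ≤ r := by omega
  obtain ⟨hZcard, hZM, hrw, hAsd⟩ := zfacts M W w r zf hW hr hr2 hzf
  set Z := W.image zf with hZdef
  set W' := W.image (fun A => A \ Z) with hW'def
  have hrn : r ≤ M.card := hZcard ▸ Finset.card_le_card hZM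
  have hW'facts : ∀ A' ∈ W', A' ⊆ M \ Z ∧ A'.card = w - (r-1) := by
    intro A' hA'
    obtain ⟨A, hAW, rfl⟩ := Finset.mem_image.mp hA'
    exact ⟨Finset.sdiff_subset_sdiff (hW A hAW).1 (le_refl _), hAsd A hAW⟩
  have h2' : ¬ ∃ x, ∀ A' ∈ W', x ∈ A' := by
    rintro ⟨x, hx⟩
    refine h2 ⟨x, fun A hA => ?_⟩
    have := hx (A \ Z) (Finset.mem_image_of_mem _ hA)
    exact (Finset.mem_sdiff.mp this).1
  have hMZcard : (M \ Z).card = M.card - r := by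
    rw [Finset.card_sdiff_of_subset hZM, hZcard]
  have hn' : 2 * (w - (r-1)) ≤ (M \ Z).card := by rw [hMZcard]; omega
  have IH := main_bound (w - (r-1)) W' (M \ Z) b hb1 hW'facts h2' hn'
  have D := decomp M W b w r zf hb1 hW hr hr2 hzf
  rw [← hZdef] at D
  rw [← hW'def] at D
  rw [hMZcard] at IH
  set n := M.card with hndef
  have e1 : (n - r) - (w - (r-1)) = n - w - 1 := by omega
  have e2 : (n - r) - 2 * (w - (r-1)) = (n - 2*w) + (r - 2) := by omega
  rw [e1] at D
  rw [e1, e2] at IH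
  have pas1 : (n - w).choose b = (n-w-1).choose (b-1) + (n-w-1).choose b := by
    have h1 : n - w = (n-w-1) + 1 := by omega
    have h2 : b = (b-1) + 1 := by omega
    rw [h1, h2, Nat.choose_succ_succ]
    try simp [Nat.succ_eq_add_one]
  have cA := chooseAdd b (n-w-2) (r-2) (n-2*w) hb1 (by omega)
  have pas2 : (n-w-1).choose (b-1) = (n-w-2).choose (b-2) + (n-w-2).choose (b-1) := by
    have h1 : n - w - 1 = (n-w-2) + 1 := by omega
    have h2 : b - 1 = (b-2) + 1 := by omega
    rw [h1, h2, Nat.choose_succ_succ]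
    try simp [Nat.succ_eq_add_one]
  have hS2 : 2 ≤ (n-w-2).choose (b-2) := by
    have h1 : ((b-2)+1).choose (b-2) ≤ (n-w-2).choose (b-2) :=
      Nat.choose_le_choose _ (by omega)
    rw [Nat.choose_succ_self_right] at h1
    omega
  have mulsplit : r * (n-w-1).choose (b-1)
      = (r-2) * (n-w-1).choose (b-1) + 2 * (n-w-1).choose (b-1) := by
    have h3 : r = (r-2) + 2 := by omega
    nth_rewrite 1 [h3]
    rw [add_mul]
  have mulsplit2 : (r-2) * (n-w-1).choose (b-1)
      = (r-2) * (n-w-2).choose (b-2) + (r-2) * (n-w-2).choose (b-1) := by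
    rw [pas2, mul_add]
  have mulge : (r-2) * 2 ≤ (r-2) * (n-w-2).choose (b-2) :=
    Nat.mul_le_mul_left _ hS2
  omega

lemma perm_exists (m s : ℕ) (A B : Finset ℕ) (hs1 : 1 ≤ s) (h2s : 2*s ≤ m)
    (hA : A ⊆ Finset.Icc 1 m) (hB : B ⊆ Finset.Icc 1 m) (hdisj : Disjoint A B)
    (hcA : A.card = s) (hcB : B.card = s) :
    ∃ σ : Equiv.Perm ℕ, (∀ x, x ∈ Finset.Icc 1 m ↔ σ x ∈ Finset.Icc 1 m) ∧
      (Finset.Icc 1 s).image σ = A ∧ (Finset.Icc (s+1) (2*s)).image σ = B := by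
  classical
  set M := Finset.Icc 1 m with hM
  set I1 := Finset.Icc 1 s with hI1
  set I2 := Finset.Icc (s+1) (2*s) with hI2
  set R : Finset ℕ := M \ (I1 ∪ I2) with hR
  set R' : Finset ℕ := M \ (A ∪ B) with hR'
  have hI1M : I1 ⊆ M := by
    intro x hx; rw [hI1, Finset.mem_Icc] at hx; rw [hM, Finset.mem_Icc]; omega
  have hI2M : I2 ⊆ M := by
    intro x hx; rw [hI2, Finset.mem_Icc] at hx; rw [hM, Finset.mem_Icc]; omega
  have hI12 : Disjoint I1 I2 := by
    rw [Finset.disjoint_left]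
    intro x h1 h2
    rw [hI1, Finset.mem_Icc] at h1; rw [hI2, Finset.mem_Icc] at h2; omega
  have hcI1 : I1.card = s := by rw [hI1, Nat.card_Icc]; omega
  have hcI2 : I2.card = s := by rw [hI2, Nat.card_Icc]; omega
  have hcR : R.card = m - 2*s := by
    rw [hR, Finset.card_sdiff_of_subset (Finset.union_subset hI1M hI2M),
      Finset.card_union_of_disjoint hI12, hcI1, hcI2, hM, Nat.card_Icc]
    omega
  have hcR' : R'.card = m - 2*s := by
    rw [hR', Finset.card_sdiff_of_subset (Finset.union_subset hA hB),
      Finset.card_union_of_disjoint hdisj, hcA, hcB, hM, Nat.card_Icc]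
    omega
  have e1 : {x // x ∈ I1} ≃ {x // x ∈ A} := Finset.equivOfCardEq (by rw [hcI1, hcA])
  have e2 : {x // x ∈ I2} ≃ {x // x ∈ B} := Finset.equivOfCardEq (by rw [hcI2, hcB])
  have e3 : {x // x ∈ R} ≃ {x // x ∈ R'} := Finset.equivOfCardEq (by rw [hcR, hcR'])
  set f : ℕ → ℕ := fun x =>
    if h : x ∈ I1 then (e1 ⟨x, h⟩ : ℕ)
    else if h : x ∈ I2 then (e2 ⟨x, h⟩ : ℕ)
    else if h : x ∈ R then (e3 ⟨x, h⟩ : ℕ)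
    else x with hf
  set g : ℕ → ℕ := fun y =>
    if h : y ∈ A then (e1.symm ⟨y, h⟩ : ℕ)
    else if h : y ∈ B then (e2.symm ⟨y, h⟩ : ℕ)
    else if h : y ∈ R' then (e3.symm ⟨y, h⟩ : ℕ)
    else y with hg
  have hAR' : Disjoint A R' := by
    rw [Finset.disjoint_left]; intro x hx hx'
    rw [hR', Finset.mem_sdiff, Finset.mem_union] at hx'; exact hx'.2 (Or.inl hx)
  have hBR' : Disjoint B R' := by
    rw [Finset.disjoint_left]; intro x hx hx'
    rw [hR', Finset.mem_sdiff, Finset.mem_union] at hx'; exact hx'.2 (Or.inr hx)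
  have hR'M : R' ⊆ M := by rw [hR']; exact Finset.sdiff_subset
  have hRI : ∀ u, u ∈ R → u ∉ I1 ∧ u ∉ I2 := by
    intro u hu
    rw [hR, Finset.mem_sdiff, Finset.mem_union] at hu
    exact ⟨fun hc => hu.2 (Or.inl hc), fun hc => hu.2 (Or.inr hc)⟩
  have hgf : ∀ x, g (f x) = x := by
    intro x
    by_cases h1 : x ∈ I1
    · have : f x = (e1 ⟨x, h1⟩ : ℕ) := by rw [hf]; simp [h1]
      rw [this, hg]
      have hmem : (e1 ⟨x, h1⟩ : ℕ) ∈ A := (e1 ⟨x, h1⟩).2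
      simp only [hmem, dif_pos]
      rw [Subtype.coe_eta, Equiv.symm_apply_apply]
    · by_cases h2 : x ∈ I2
      · have : f x = (e2 ⟨x, h2⟩ : ℕ) := by rw [hf]; simp [h1, h2]
        rw [this, hg]
        have hmem : (e2 ⟨x, h2⟩ : ℕ) ∈ B := (e2 ⟨x, h2⟩).2
        have hnA : (e2 ⟨x, h2⟩ : ℕ) ∉ A := fun hc => Finset.disjoint_left.mp hdisj hc hmem
        simp only [hnA, hmem, dif_neg, dif_pos, not_false_iff]
        rw [Subtype.coe_eta, Equiv.symm_apply_apply]
      · by_cases h3 : x ∈ R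
        · have : f x = (e3 ⟨x, h3⟩ : ℕ) := by rw [hf]; simp [h1, h2, h3]
          rw [this, hg]
          have hmem : (e3 ⟨x, h3⟩ : ℕ) ∈ R' := (e3 ⟨x, h3⟩).2
          have hnA : (e3 ⟨x, h3⟩ : ℕ) ∉ A := fun hc => Finset.disjoint_left.mp hAR' hc hmem
          have hnB : (e3 ⟨x, h3⟩ : ℕ) ∉ B := fun hc => Finset.disjoint_left.mp hBR' hc hmem
          simp only [hnA, hnB, hmem, dif_neg, dif_pos, not_false_iff]
          rw [Subtype.coe_eta, Equiv.symm_apply_apply]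
        · have hxM : x ∉ M := by
            intro hxM
            exact h3 (by rw [hR, Finset.mem_sdiff, Finset.mem_union]; exact ⟨hxM, by tauto⟩)
          have : f x = x := by rw [hf]; simp [h1, h2, h3]
          rw [this, hg]
          have hnA : x ∉ A := fun hc => hxM (hA hc)
          have hnB : x ∉ B := fun hc => hxM (hB hc)
          have hnR' : x ∉ R' := fun hc => hxM (hR'M hc)
          simp [hnA, hnB, hnR']
  have hfg : ∀ y, f (g y) = y := by
    intro y
    by_cases h1 : y ∈ A
    · have : g y = (e1.symm ⟨y, h1⟩ : ℕ) := by rw [hg]; simp [h1]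
      rw [this, hf]
      have hmem : (e1.symm ⟨y, h1⟩ : ℕ) ∈ I1 := (e1.symm ⟨y, h1⟩).2
      simp only [hmem, dif_pos]
      rw [Subtype.coe_eta, Equiv.apply_symm_apply]
    · by_cases h2 : y ∈ B
      · have : g y = (e2.symm ⟨y, h2⟩ : ℕ) := by rw [hg]; simp [h1, h2]
        rw [this, hf]
        have hmem : (e2.symm ⟨y, h2⟩ : ℕ) ∈ I2 := (e2.symm ⟨y, h2⟩).2
        have hnI1 : (e2.symm ⟨y, h2⟩ : ℕ) ∉ I1 := fun hc => Finset.disjoint_left.mp hI12 hc hmem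
        simp only [hnI1, hmem, dif_neg, dif_pos, not_false_iff]
        rw [Subtype.coe_eta, Equiv.apply_symm_apply]
      · by_cases h3 : y ∈ R'
        · have : g y = (e3.symm ⟨y, h3⟩ : ℕ) := by rw [hg]; simp [h1, h2, h3]
          rw [this, hf]
          have hmem : (e3.symm ⟨y, h3⟩ : ℕ) ∈ R := (e3.symm ⟨y, h3⟩).2
          have hnI1 : (e3.symm ⟨y, h3⟩ : ℕ) ∉ I1 := (hRI _ hmem).1
          have hnI2 : (e3.symm ⟨y, h3⟩ : ℕ) ∉ I2 := (hRI _ hmem).2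
          simp only [hnI1, hnI2, hmem, dif_neg, dif_pos, not_false_iff]
          rw [Subtype.coe_eta, Equiv.apply_symm_apply]
        · have hyM : y ∉ M := by
            intro hyM
            exact h3 (by rw [hR', Finset.mem_sdiff, Finset.mem_union]; exact ⟨hyM, by tauto⟩)
          have : g y = y := by rw [hg]; simp [h1, h2, h3]
          rw [this, hf]
          have hnI1 : y ∉ I1 := fun hc => hyM (hI1M hc)
          have hnI2 : y ∉ I2 := fun hc => hyM (hI2M hc)
          have hnR : y ∉ R := fun hc => hyM (by rw [hR] at hc; exact (Finset.mem_sdiff.mp hc).1)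
          simp [hnI1, hnI2, hnR]
  set σ : Equiv.Perm ℕ := ⟨f, g, hgf, hfg⟩ with hσ
  have hfM : ∀ x, x ∈ M → f x ∈ M := by
    intro x hx
    by_cases h1 : x ∈ I1
    · have : f x = (e1 ⟨x, h1⟩ : ℕ) := by rw [hf]; simp [h1]
      rw [this]; exact hA (e1 ⟨x, h1⟩).2
    · by_cases h2 : x ∈ I2
      · have : f x = (e2 ⟨x, h2⟩ : ℕ) := by rw [hf]; simp [h1, h2]
        rw [this]; exact hB (e2 ⟨x, h2⟩).2
      · have h3 : x ∈ R := by rw [hR, Finset.mem_sdiff, Finset.mem_union]; exact ⟨hx, by tauto⟩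
        have : f x = (e3 ⟨x, h3⟩ : ℕ) := by rw [hf]; simp [h1, h2, h3]
        rw [this]; exact hR'M (e3 ⟨x, h3⟩).2
  refine ⟨σ, ?_, ?_, ?_⟩
  · intro x
    constructor
    · intro hx; exact hfM x hx
    · intro hx
      by_contra hxM
      have h1 : x ∉ I1 := fun hc => hxM (hI1M hc)
      have h2 : x ∉ I2 := fun hc => hxM (hI2M hc)
      have h3 : x ∉ R := fun hc => hxM (by rw [hR] at hc; exact (Finset.mem_sdiff.mp hc).1)
      have : σ x = x := by show f x = x; rw [hf]; simp [h1, h2, h3]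
      rw [this] at hx
      exact hxM hx
  · apply Finset.eq_of_subset_of_card_le
    · intro y hy
      obtain ⟨x, hx, rfl⟩ := Finset.mem_image.mp hy
      have h1 : x ∈ I1 := hx
      have : σ x = (e1 ⟨x, h1⟩ : ℕ) := by show f x = _; rw [hf]; simp [h1]
      rw [this]; exact (e1 ⟨x, h1⟩).2
    · rw [Finset.card_image_of_injective _ σ.injective, hcA, hcI1]
  · apply Finset.eq_of_subset_of_card_le
    · intro y hy
      obtain ⟨x, hx, rfl⟩ := Finset.mem_image.mp hy
      have h2 : x ∈ I2 := hx
      have h1 : x ∉ I1 := fun hc => Finset.disjoint_left.mp hI12 hc h2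
      have : σ x = (e2 ⟨x, h2⟩ : ℕ) := by show f x = _; rw [hf]; simp [h1, h2]
      rw [this]; exact (e2 ⟨x, h2⟩).2
    · rw [Finset.card_image_of_injective _ σ.injective, hcB, hcI2]

/-- `S` is a hitting set (cover) for the family `H`. -/
def covers (S : Finset ℕ) (H : Finset (Finset ℕ)) : Prop := ∀ A ∈ H, (S ∩ A).Nonempty

/-- The maximal family of `(k-1)`-subsets of `[m]` cross-intersecting with `H`. -/
def maxCross (m k : ℕ) (H : Finset (Finset ℕ)) : Finset (Finset ℕ) :=
  ((Finset.Icc 1 m).powersetCard (k - 1)).filter (fun A => ∀ B ∈ H, (A ∩ B).Nonempty)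

/-- Two families over the ground set `[m]` are isomorphic if one is obtained from the other
by a permutation of the ground set. -/
def isoFam (m : ℕ) (F G : Finset (Finset ℕ)) : Prop :=
  ∃ σ : Equiv.Perm ℕ, (∀ x, x ∈ Finset.Icc 1 m ↔ σ x ∈ Finset.Icc 1 m) ∧
    G = F.image (fun S => S.image σ)

/-- Lemma (first part): for `k ≥ s`, `m ≥ k + s`, `k ≥ 4`, among families `H ⊆ C([m],s)`
with covering number `2`, minimal w.r.t. this property, the quantity `|F| + |H|` (where `F`
is the maximal `(k-1)`-uniform family cross-intersecting with `H`) is uniquely maximized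
when `H` is isomorphic to `T_2'(s) = {[s],[s+1,2s]}`. -/
theorem min_cover_two_max (m s k : ℕ) (hsk : s ≤ k) (hm : k + s ≤ m) (hk : 4 ≤ k)
    (H : Finset (Finset ℕ)) (hH : H ⊆ (Finset.Icc 1 m).powersetCard s)
    (hcov2 : ∃ S : Finset ℕ, S.card ≤ 2 ∧ covers S H)
    (hnotcov1 : ¬ ∃ S : Finset ℕ, S.card ≤ 1 ∧ covers S H)
    (hmin : ∀ G ⊆ H, G ≠ H → ∃ S : Finset ℕ, S.card ≤ 1 ∧ covers S G) :
    (maxCross m k H).card + H.card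
        ≤ (maxCross m k ({Finset.Icc 1 s, Finset.Icc (s + 1) (2 * s)} :
            Finset (Finset ℕ))).card
          + ({Finset.Icc 1 s, Finset.Icc (s + 1) (2 * s)} : Finset (Finset ℕ)).card ∧
    ((maxCross m k H).card + H.card
        = (maxCross m k ({Finset.Icc 1 s, Finset.Icc (s + 1) (2 * s)} :
            Finset (Finset ℕ))).card
          + ({Finset.Icc 1 s, Finset.Icc (s + 1) (2 * s)} : Finset (Finset ℕ)).card →
      isoFam m ({Finset.Icc 1 s, Finset.Icc (s + 1) (2 * s)} : Finset (Finset ℕ)) H) := by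
  classical
  set M := Finset.Icc 1 m with hMdef
  set b := k - 1 with hbdef
  have hb3 : 3 ≤ b := by omega
  have hMc : M.card = m := by rw [hMdef, Nat.card_Icc]; omega
  -- basic facts about H
  have hsets : ∀ A ∈ H, A ⊆ M ∧ A.card = s := by
    intro A hA
    have := hH hA
    rw [Finset.mem_powersetCard] at this
    exact ⟨this.1, this.2⟩
  have hHne : H.Nonempty := by
    rcases Finset.eq_empty_or_nonempty H with rfl | h
    · exact absurd ⟨∅, by simp, fun A hA => absurd hA (Finset.notMem_empty A)⟩ hnotcov1
    · exact h
  have hs1 : 1 ≤ s := by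
    by_contra hs0
    obtain ⟨A0, hA0⟩ := hHne
    have hA0e : A0 = ∅ := Finset.card_eq_zero.mp (by rw [(hsets A0 hA0).2]; omega)
    obtain ⟨S, _, hScov⟩ := hcov2
    have h0 := hScov A0 hA0
    rw [hA0e] at h0
    simp at h0
  have h2 : ¬ ∃ x, ∀ A ∈ H, x ∈ A := by
    rintro ⟨x, hx⟩
    exact hnotcov1 ⟨{x}, by simp, fun A hA =>
      ⟨x, Finset.mem_inter.mpr ⟨Finset.mem_singleton_self x, hx A hA⟩⟩⟩
  have hr2 : 2 ≤ H.card := by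
    rcases Nat.lt_or_ge H.card 2 with h | h
    · interval_cases h' : H.card
      · exact absurd (Finset.card_eq_zero.mp h' ▸ hHne) (by simp)
      · obtain ⟨A, hA⟩ := Finset.card_eq_one.mp h'
        have hAW : A ∈ H := hA ▸ Finset.mem_singleton_self A
        obtain ⟨x, hx⟩ := Finset.card_pos.mp (by rw [(hsets A hAW).2]; omega)
        refine absurd ⟨x, fun B hB => ?_⟩ h2
        rw [hA, Finset.mem_singleton] at hB
        exact hB ▸ hx
    · exact h
  -- z-structure from minimality
  have hz : ∀ A : Finset ℕ, ∃ z, A ∈ H → (z ∉ A ∧ ∀ B ∈ H, B ≠ A → z ∈ B) := by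
    intro A
    by_cases hA : A ∈ H
    · have hne : H.erase A ≠ H := by
        intro he
        have : A ∉ H.erase A := Finset.notMem_erase A H
        rw [he] at this
        exact this hA
      obtain ⟨S, hS1, hScov⟩ := hmin (H.erase A) (Finset.erase_subset A H) hne
      have hSne : S.Nonempty := by
        obtain ⟨A1, hA1⟩ := Finset.card_pos.mp (by rw [Finset.card_erase_of_mem hA]; omega :
          0 < (H.erase A).card)
        obtain ⟨x, hx⟩ := hScov A1 hA1
        exact ⟨x, (Finset.mem_inter.mp hx).1⟩
      have hS : S.card = 1 := by
        have := Finset.card_pos.mpr hSne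
        omega
      obtain ⟨z, rfl⟩ := Finset.card_eq_one.mp hS
      have hzB : ∀ B ∈ H, B ≠ A → z ∈ B := by
        intro B hB hBA
        obtain ⟨x, hx⟩ := hScov B (Finset.mem_erase.mpr ⟨hBA, hB⟩)
        rw [Finset.mem_inter, Finset.mem_singleton] at hx
        exact hx.1 ▸ hx.2
      refine ⟨z, fun _ => ⟨?_, hzB⟩⟩
      intro hzA
      refine hnotcov1 ⟨{z}, by simp, fun B hB => ?_⟩
      rcases eq_or_ne B A with rfl | hBA
      · exact ⟨z, Finset.mem_inter.mpr ⟨Finset.mem_singleton_self z, hzA⟩⟩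
      · exact ⟨z, Finset.mem_inter.mpr ⟨Finset.mem_singleton_self z, hzB B hB hBA⟩⟩
    · exact ⟨0, fun h => absurd h hA⟩
  choose zf hzf' using hz
  have hzf : ∀ A ∈ H, zf A ∉ A ∧ ∀ B ∈ H, B ≠ A → zf A ∈ B := fun A hA => hzf' A hA
  -- facts about the T2 family
  set IA := Finset.Icc 1 s with hIA
  set IB := Finset.Icc (s+1) (2*s) with hIB
  have hIAM : IA ⊆ M := by
    intro x hx; rw [hIA, Finset.mem_Icc] at hx; rw [hMdef, Finset.mem_Icc]; omega
  have hIBM : IB ⊆ M := by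
    intro x hx; rw [hIB, Finset.mem_Icc] at hx; rw [hMdef, Finset.mem_Icc]; omega
  have hIAB : Disjoint IA IB := by
    rw [Finset.disjoint_left]
    intro x h1 h2
    rw [hIA, Finset.mem_Icc] at h1; rw [hIB, Finset.mem_Icc] at h2; omega
  have hcIA : IA.card = s := by rw [hIA, Nat.card_Icc]; omega
  have hcIB : IB.card = s := by rw [hIB, Nat.card_Icc]; omega
  have hIAne : IA ≠ IB := by
    intro he
    have h1 : (1:ℕ) ∈ IA := by rw [hIA, Finset.mem_Icc]; omega
    rw [he, hIB, Finset.mem_Icc] at h1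
    omega
  have hT2card : ({IA, IB} : Finset (Finset ℕ)).card = 2 := by
    rw [Finset.card_insert_of_notMem (by simpa using hIAne), Finset.card_singleton]
  have hT2cnt := two_disjoint M IA IB b s hIAM hIBM hIAB hcIA hcIB
  have hmaxT2 : (maxCross m k ({IA, IB} : Finset (Finset ℕ))).card = cnt M b {IA, IB} := rfl
  have hmaxH : (maxCross m k H).card = cnt M b H := rfl
  rw [hMc] at hT2cnt
  -- case split on |H|
  rcases eq_or_lt_of_le hr2 with hr2' | hr3
  · -- |H| = 2 : isomorphic to T2
    obtain ⟨A, B, hAB, hHAB⟩ := Finset.card_eq_two.mp hr2'.symm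
    have hAW : A ∈ H := by rw [hHAB]; simp
    have hBW : B ∈ H := by rw [hHAB]; simp
    have hdisj : Disjoint A B := by
      rw [Finset.disjoint_left]
      intro x hxA hxB
      refine h2 ⟨x, fun C hC => ?_⟩
      rw [hHAB, Finset.mem_insert, Finset.mem_singleton] at hC
      rcases hC with rfl | rfl
      · exact hxA
      · exact hxB
    obtain ⟨σ, hσM, hσA, hσB⟩ := perm_exists m s A B hs1 (by omega)
      ((hsets A hAW).1) ((hsets B hBW).1) hdisj (hsets A hAW).2 (hsets B hBW).2
    have hiso : isoFam m ({IA, IB} : Finset (Finset ℕ)) H := by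
      refine ⟨σ, hσM, ?_⟩
      rw [Finset.image_insert, Finset.image_singleton, hσA, hσB, hHAB]
    have hHcnt := two_disjoint M A B b s (hsets A hAW).1 (hsets B hBW).1 hdisj
      (hsets A hAW).2 (hsets B hBW).2
    rw [hMc] at hHcnt
    have hceq : cnt M b H = cnt M b {IA, IB} := by
      rw [hHAB]; omega
    constructor
    · rw [hmaxH, hmaxT2, hceq, hT2card, ← hr2']
    · exact fun _ => hiso
  · -- |H| ≥ 3 : strict inequality
    have hstrict := main_bound_strict M H b s H.card zf hb3 hsets rfl (by omega) hzf h2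
      (by omega) (by omega)
    rw [hMc] at hstrict
    have hlt : cnt M b H + H.card + 1 ≤ cnt M b {IA, IB} + 2 := by omega
    constructor
    · rw [hmaxH, hmaxT2, hT2card]; omega
    · intro heq
      rw [hmaxH, hmaxT2, hT2card] at heq
      omega
end

section
/- Let H ⊆ C([m],s) be an intersecting family with covering number 2 that is minimal with respect to having covering number 2 (in particular |H| = z ≥ 3 and for each H_l ∈ H there is an element i_l contained in every member of H except H_l). Then z ≤ s + 1. -/
open Finset

/-- Bollobás set-pair consequence: an intersecting family `H ⊆ C([m],s)` with covering
number `2`, minimal with respect to having covering number `2`, has at most `s + 1`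
members. -/
theorem min_cover_two_card_bound (m s : ℕ)
    (H : Finset (Finset ℕ)) (hH : H ⊆ (Finset.Icc 1 m).powersetCard s)
    (hint : ∀ A ∈ H, ∀ B ∈ H, (A ∩ B).Nonempty)
    (hcov2 : ∃ S : Finset ℕ, S.card ≤ 2 ∧ covers S H)
    (hnotcov1 : ¬ ∃ S : Finset ℕ, S.card ≤ 1 ∧ covers S H)
    (hmin : ∀ G ⊆ H, G ≠ H → ∃ S : Finset ℕ, S.card ≤ 1 ∧ covers S G)
    (hcard : 3 ≤ H.card) :
    H.card ≤ s + 1 := by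
  classical
  have key : ∀ A ∈ H, ∃ i, i ∉ A ∧ ∀ B ∈ H, B ≠ A → i ∈ B := by
    intro A hA
    obtain ⟨S, hS1, hScov⟩ := hmin (H.erase A) (erase_subset _ _)
      (fun h => (notMem_erase A H) (h.symm ▸ hA))
    have hne : (H.erase A).Nonempty := by
      rw [← card_pos, card_erase_of_mem hA]; omega
    obtain ⟨B, hB⟩ := hne
    obtain ⟨i, hi⟩ := hScov B hB
    have hiS : i ∈ S := (mem_inter.1 hi).1
    have hmem : ∀ B ∈ H, B ≠ A → i ∈ B := by
      intro C hC hCA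
      obtain ⟨j, hj⟩ := hScov C (mem_erase.2 ⟨hCA, hC⟩)
      have hjS := (mem_inter.1 hj).1
      have : j = i := card_le_one.mp hS1 j hjS i hiS
      exact this ▸ (mem_inter.1 hj).2
    refine ⟨i, ?_, hmem⟩
    intro hiA
    apply hnotcov1
    refine ⟨{i}, by simp, ?_⟩
    intro C hC
    by_cases hCA : C = A
    · exact ⟨i, mem_inter.2 ⟨mem_singleton_self i, hCA ▸ hiA⟩⟩
    · exact ⟨i, mem_inter.2 ⟨mem_singleton_self i, hmem C hC hCA⟩⟩
  choose! f hf1 hf2 using key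
  obtain ⟨B₀, hB₀⟩ := card_pos.mp (by omega : 0 < H.card)
  have hmaps : ∀ A ∈ H.erase B₀, f A ∈ B₀ := by
    intro A hA
    have h := mem_erase.1 hA
    exact hf2 A h.2 B₀ hB₀ (Ne.symm h.1)
  have hinj : Set.InjOn f (H.erase B₀) := by
    intro A hA A' hA' hEq
    by_contra hne
    have h1 := mem_erase.1 hA
    have h2 := mem_erase.1 hA'
    have : f A ∈ A' := hf2 A h1.2 A' h2.2 (Ne.symm hne)
    exact hf1 A' h2.2 (hEq ▸ this)
  have hle : (H.erase B₀).card ≤ B₀.card :=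
    card_le_card_of_injOn f hmaps hinj
  have hB₀card : B₀.card = s := (mem_powersetCard.1 (hH hB₀)).2
  rw [card_erase_of_mem hB₀, hB₀card] at hle
  omega
end
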